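/- arXiv:0710.5839 — 2 statements merged into one kernel-verified Lean document; each statement's English description precedes it below -/
import Mathlib

section
/- Every L^0-linear automorphism α of the algebra F(D) of finite-generated L^0-linear operators on D is spatial: there exists an invertible x ∈ L(D) with x⁻¹ ∈ L(D) such that α(a) = x a x⁻¹ for all a ∈ F(D). -/
open MeasureTheory

namespace KHPaper

variable {Ω : Type} [MeasurableSpace Ω] {μ : Measure Ω}

/-- `L⁰(Ω)`: measurable complex functions modulo a.e. equality. -/
abbrev L0 (Ω : Type) [MeasurableSpace Ω] (μ : Measure Ω) := Ω →ₘ[μ] ℂ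
/-- real-valued `L⁰`. -/
abbrev L0R (Ω : Type) [MeasurableSpace Ω] (μ : Measure Ω) := Ω →ₘ[μ] ℝ

noncomputable instance : CommRing (L0 Ω μ) :=
  { (inferInstance : AddCommGroup (L0 Ω μ)),
    (inferInstance : CommMonoid (L0 Ω μ)) with
    left_distrib := by
      intro a b c
      apply AEEqFun.ext
      filter_upwards [AEEqFun.coeFn_mul a (b + c), AEEqFun.coeFn_add b c,
        AEEqFun.coeFn_mul a b, AEEqFun.coeFn_mul a c,
        AEEqFun.coeFn_add (a * b) (a * c)] with x h1 h2 h3 h4 h5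
      simp only [h1, h5, Pi.mul_apply, Pi.add_apply, h2, h3, h4, mul_add]
    right_distrib := by
      intro a b c
      apply AEEqFun.ext
      filter_upwards [AEEqFun.coeFn_mul (a + b) c, AEEqFun.coeFn_add a b,
        AEEqFun.coeFn_mul a c, AEEqFun.coeFn_mul b c,
        AEEqFun.coeFn_add (a * c) (b * c)] with x h1 h2 h3 h4 h5
      simp only [h1, h5, Pi.mul_apply, Pi.add_apply, h2, h3, h4, add_mul]
    zero_mul := by
      intro a
      apply AEEqFun.ext
      filter_upwards [AEEqFun.coeFn_mul 0 a, AEEqFun.coeFn_zero (β := ℂ) (μ := μ)] with x h1 h2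
      simp [h1, h2]
    mul_zero := by
      intro a
      apply AEEqFun.ext
      filter_upwards [AEEqFun.coeFn_mul a 0, AEEqFun.coeFn_zero (β := ℂ) (μ := μ)] with x h1 h2
      simp [h1, h2] }

/-- pointwise absolute value `L⁰ → L⁰ℝ`. -/
noncomputable def absL (f : L0 Ω μ) : L0R Ω μ := f.comp (fun z : ℂ => ‖z‖) continuous_norm
/-- pointwise real part. -/
noncomputable def reL (f : L0 Ω μ) : L0R Ω μ := f.comp Complex.re Complex.continuous_re
/-- pointwise complex conjugation. -/
noncomputable def conjL (f : L0 Ω μ) : L0 Ω μ :=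
  f.comp (starRingEnd ℂ) (by continuity)
/-- embedding of real `L⁰` into complex `L⁰`. -/
noncomputable def ofRealL (f : L0R Ω μ) : L0 Ω μ := f.comp Complex.ofReal Complex.continuous_ofReal
/-- pointwise square root on real `L⁰`. -/
noncomputable def sqrtL (f : L0R Ω μ) : L0R Ω μ := f.comp Real.sqrt Real.continuous_sqrt
/-- constants. -/
noncomputable def constL (Ω : Type) [MeasurableSpace Ω] (μ : Measure Ω) (c : ℂ) : L0 Ω μ :=
  AEEqFun.const Ω c

/-- idempotents of `L⁰` (the Boolean algebra `∇`). -/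
def IsIdem (π : L0 Ω μ) : Prop := π * π = π

/-- A family of idempotents is a partition of the unit in `∇`. -/
def IsPartition {ι : Type*} (π : ι → L0 Ω μ) : Prop :=
  (∀ i, IsIdem (π i)) ∧ (∀ i j, i ≠ j → π i * π j = 0) ∧
    (∀ e : L0 Ω μ, IsIdem e → (∀ i, π i * e = 0) → e = 0)

/-- a decreasing net of nonnegative elements of `L⁰ℝ` has infimum zero. -/
def InfZero {ι : Type*} (e : ι → L0R Ω μ) : Prop :=
  (∀ i, 0 ≤ e i) ∧ ∀ g : L0R Ω μ, (∀ i, g ≤ e i) → g ≤ 0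

/-- `(o)`-convergence of a net in `L⁰ℝ`. -/
def OConv {ι : Type*} [Preorder ι] (f : ι → L0R Ω μ) (l : L0R Ω μ) : Prop :=
  ∃ e : ι → L0R Ω μ, Antitone e ∧ InfZero e ∧ ∀ i, |f i - l| ≤ e i

/-- `(o)`-summability of a family in `L⁰ℝ` (order convergence of the net of partial sums). -/
def OSummable {ι : Type*} (g : ι → L0R Ω μ) : Prop :=
  ∃ s : L0R Ω μ, OConv (fun F : Finset ι => ∑ i ∈ F, g i) s

section LNS

variable {X : Type*} [AddCommGroup X]

/-- An `L⁰`-valued norm making `X` a lattice-normed space over `L⁰` (complex vector space case). -/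
structure LNSNorm (Ω : Type) [MeasurableSpace Ω] (μ : Measure Ω)
    (X : Type*) [AddCommGroup X] [Module ℂ X] where
  nrm : X → L0R Ω μ
  nrm_nonneg : ∀ x, 0 ≤ nrm x
  nrm_eq_zero : ∀ x, nrm x = 0 ↔ x = 0
  nrm_smul : ∀ (c : ℂ) (x : X), nrm (c • x) = ‖c‖ • nrm x
  nrm_triangle : ∀ x y, nrm (x + y) ≤ nrm x + nrm y

variable [Module ℂ X]

/-- `d`-decomposability (Kantorovich norm). -/
def LNSNorm.DDecomp (N : LNSNorm Ω μ X) : Prop :=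
  ∀ (x : X) (e₁ e₂ : L0R Ω μ), 0 ≤ e₁ → 0 ≤ e₂ → e₁ ⊓ e₂ = 0 → N.nrm x = e₁ + e₂ →
    ∃ x₁ x₂ : X, x = x₁ + x₂ ∧ N.nrm x₁ = e₁ ∧ N.nrm x₂ = e₂

/-- `(bo)`-convergence of a net in `X`. -/
def LNSNorm.BOConv (N : LNSNorm Ω μ X) {ι : Type*} [Preorder ι] (f : ι → X) (l : X) : Prop :=
  OConv (fun i => N.nrm (f i - l)) 0

/-- `(bo)`-Cauchy nets. -/
def LNSNorm.BOCauchy (N : LNSNorm Ω μ X) {ι : Type*} [Preorder ι] (f : ι → X) : Prop :=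
  ∃ e : ι → L0R Ω μ, Antitone e ∧ InfZero e ∧
    ∀ i j k, k ≤ i → k ≤ j → N.nrm (f i - f j) ≤ e k

/-- `(bo)`-completeness. -/
def LNSNorm.BOComplete (N : LNSNorm Ω μ X) : Prop :=
  ∀ (ι : Type) (_ : Nonempty ι) (_ : SemilatticeSup ι) (f : ι → X),
    N.BOCauchy f → ∃ l : X, N.BOConv f l

end LNS

section Norms
variable {X : Type*} [AddCommGroup X]
def DDecompN (nrm : X → L0R Ω μ) : Prop :=
  ∀ (x : X) (e₁ e₂ : L0R Ω μ), 0 ≤ e₁ → 0 ≤ e₂ → e₁ ⊓ e₂ = 0 → nrm x = e₁ + e₂ →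
    ∃ x₁ x₂ : X, x = x₁ + x₂ ∧ nrm x₁ = e₁ ∧ nrm x₂ = e₂
def BOConvN (nrm : X → L0R Ω μ) {ι : Type*} [Preorder ι] (f : ι → X) (l : X) : Prop :=
  OConv (fun i => nrm (f i - l)) 0
def BOCauchyN (nrm : X → L0R Ω μ) {ι : Type*} [Preorder ι] (f : ι → X) : Prop :=
  ∃ e : ι → L0R Ω μ, Antitone e ∧ InfZero e ∧
    ∀ i j k, k ≤ i → k ≤ j → nrm (f i - f j) ≤ e k
def BOCompleteN (nrm : X → L0R Ω μ) : Prop :=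
  ∀ (ι : Type) (_ : Nonempty ι) (_ : SemilatticeSup ι) (f : ι → X),
    BOCauchyN nrm f → ∃ l : X, BOConvN nrm f l
def BODenseN (nrm : X → L0R Ω μ) (D : Set X) : Prop :=
  ∀ x : X, ∃ (ι : Type) (_ : Nonempty ι) (_ : SemilatticeSup ι) (f : ι → X),
    (∀ i, f i ∈ D) ∧ BOConvN nrm f x
end Norms

/-- An `L⁰`-valued inner product on an `L⁰`-module. -/
structure KHInner (Ω : Type) [MeasurableSpace Ω] (μ : Measure Ω)
    (X : Type*) [AddCommGroup X] [Module (L0 Ω μ) X] where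
  inner : X → X → L0 Ω μ
  add_left : ∀ x y z, inner (x + y) z = inner x z + inner y z
  smul_left : ∀ (c : L0 Ω μ) (x y : X), inner (c • x) y = c * inner x y
  conj_symm : ∀ x y, inner x y = conjL (inner y x)
  self_real : ∀ x, inner x x = ofRealL (reL (inner x x))
  self_nonneg : ∀ x, 0 ≤ reL (inner x x)
  definite : ∀ x, inner x x = 0 → x = 0

section KH
variable {X : Type*} [AddCommGroup X] [Module (L0 Ω μ) X]
noncomputable def KHInner.knorm (K : KHInner Ω μ X) (x : X) : L0R Ω μ :=
  sqrtL (reL (K.inner x x))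
/-- `X` is a Kaplansky-Hilbert module: the induced norm is d-decomposable and (bo)-complete. -/
def KHInner.IsKH (K : KHInner Ω μ X) : Prop := DDecompN K.knorm ∧ BOCompleteN K.knorm

variable (K : KHInner Ω μ X) (D : Submodule (L0 Ω μ) X)
/-- operators with domain `D` mapping into `D`. -/
def MapsD (a : D →ₗ[L0 Ω μ] X) : Prop := ∀ φ : D, a φ ∈ D
def IsAdjAt (a : D →ₗ[L0 Ω μ] X) (ψ χ : X) : Prop :=
  ∀ φ : D, K.inner (a φ) ψ = K.inner (φ : X) χ
def AdjDomain (a : D →ₗ[L0 Ω μ] X) : Set X := {ψ | ∃ χ, IsAdjAt K D a ψ χ}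
/-- `L⁺(D)`. -/
def LPlus : Set (D →ₗ[L0 Ω μ] X) :=
  {a | MapsD D a ∧ (D : Set X) ⊆ AdjDomain K D a ∧
       ∀ ψ ∈ D, ∃ χ ∈ D, IsAdjAt K D a ψ χ}
def BOClosableOp (a : D →ₗ[L0 Ω μ] X) : Prop :=
  ∀ (ι : Type) (_ : Nonempty ι) (_ : SemilatticeSup ι) (f : ι → D) (y : X),
    BOConvN K.knorm (fun i => (f i : X)) 0 → BOConvN K.knorm (fun i => a (f i)) y → y = 0
/-- composition `a ∘ b` of operators on `D`, when `b` maps into `D`. -/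
noncomputable def compD (a b : D →ₗ[L0 Ω μ] X) (hb : MapsD D b) : D →ₗ[L0 Ω μ] X :=
  a.comp (LinearMap.codRestrict D b hb)

/-- endomorphism version: an operator on `D` having an adjoint with domain `⊇ D` and values in `D`. -/
def HasAdjE (a : Module.End (L0 Ω μ) D) : Prop :=
  ∀ ψ : D, ∃ χ : D, ∀ φ : D, K.inner (a φ : X) (ψ : X) = K.inner (φ : X) (χ : X)
/-- `L⁺(D)` realized inside `End(D)`. -/
def LPlusE : Set (Module.End (L0 Ω μ) D) := {a | HasAdjE K D a}
def IsAdjPairE (a b : Module.End (L0 Ω μ) D) : Prop :=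
  ∀ φ ψ : D, K.inner (a φ : X) (ψ : X) = K.inner (φ : X) (b ψ : X)
/-- the rank one operator `φ ⊗ ψ` on `D`. -/
noncomputable def rankOneE (φ ψ : D) : Module.End (L0 Ω μ) D where
  toFun η := K.inner (η : X) (ψ : X) • φ
  map_add' a b := by
    show K.inner (↑(a + b)) _ • φ = _
    rw [Submodule.coe_add, K.add_left]
    exact add_smul _ _ φ
  map_smul' c a := by
    show K.inner (↑(c • a)) _ • φ = _
    rw [Submodule.coe_smul, K.smul_left, RingHom.id_apply]
    exact mul_smul c _ φ
end KH

section Ops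
variable {M : Type*} [AddCommGroup M] [Module (L0 Ω μ) M]
/-- finite-generated operator: its range is a finite-generated submodule. -/
def FinGenOp (a : Module.End (L0 Ω μ) M) : Prop :=
  ∃ (n : ℕ) (g : Fin n → M), ∀ x : M, ∃ c : Fin n → L0 Ω μ, a x = ∑ i, c i • g i
def IsSubalgebraSet (U : Set (Module.End (L0 Ω μ) M)) : Prop :=
  (∀ a ∈ U, ∀ b ∈ U, a + b ∈ U) ∧ (∀ (c : L0 Ω μ), ∀ a ∈ U, c • a ∈ U) ∧
    (∀ a ∈ U, ∀ b ∈ U, a * b ∈ U)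
/-- standard algebras of operators: subalgebras containing all finite-generated operators. -/
def IsStandard (U : Set (Module.End (L0 Ω μ) M)) : Prop :=
  IsSubalgebraSet U ∧ ∀ a, FinGenOp a → a ∈ U
/-- the operator `a` is homogeneous of type one: `d(π ⬝ a(M)) = 1` for every nonzero idempotent. -/
def HomogOneOp (a : Module.End (L0 Ω μ) M) : Prop :=
  ∀ π : L0 Ω μ, IsIdem π → π ≠ 0 →
    (∃ g ∈ Set.range a, ∀ x ∈ Set.range a, ∃ c : L0 Ω μ, π • x = c • (π • g)) ∧
    ∃ x ∈ Set.range a, π • x ≠ 0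
end Ops

section DirectSum
variable {I : Type} [DecidableEq I] {X : I → Type*}
  [∀ i, AddCommGroup (X i)] [∀ i, Module (L0 Ω μ) (X i)]
  (K : ∀ i, KHInner Ω μ (X i)) (D : ∀ i, Submodule (L0 Ω μ) (X i))

/-- `D_I`: the submodule of the direct sum consisting of finitely supported tuples. -/
abbrev DI (D : ∀ i, Submodule (L0 Ω μ) (X i)) := Π₀ i, ↥(D i)

/-- the inner product of `X_I` restricted to `D_I`. -/
noncomputable def innerDI (φ ψ : DI D) : L0 Ω μ :=
  letI : ∀ (i : I) (x : ↥(D i)), Decidable (x ≠ 0) := fun _ x => Classical.dec _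
  φ.sum fun i x => (K i).inner (x : X i) ((ψ i : X i))

/-- the canonical copy of an operator on `D i` acting on `D_I`. -/
noncomputable def coordOp (i : I) (b : Module.End (L0 Ω μ) ↥(D i)) :
    Module.End (L0 Ω μ) (DI D) :=
  (DFinsupp.lsingle (R := L0 Ω μ) i).comp (b.comp (DFinsupp.lapply (R := L0 Ω μ) i))

/-- the canonical copy of the rank one operator `φ ⊗ φ`, `φ ∈ D i`, on `D_I`. -/
noncomputable def coordRankOne (i : I) (φ : ↥(D i)) : Module.End (L0 Ω μ) (DI D) :=
  coordOp D i (rankOneE (K i) (D i) φ φ)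

/-- coordinatewise operators `(a_i)` with each `a_i ∈ L⁺(D_i)`: the algebra `L⁺(D_i : i ∈ I)`. -/
def CoordLPlus : Set (Module.End (L0 Ω μ) (DI D)) :=
  {a | ∃ f : ∀ i, Module.End (L0 Ω μ) ↥(D i),
    (∀ i, HasAdjE (K i) (D i) (f i)) ∧ ∀ (φ : DI D) (i : I), a φ i = f i (φ i)}

/-- adjoint pairs on `D_I`. -/
def IsAdjPairDI (a b : Module.End (L0 Ω μ) (DI D)) : Prop :=
  ∀ φ ψ : DI D, innerDI K D (a φ) ψ = innerDI K D φ (b ψ)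

/-- the maximal `O*`-algebra `L⁺(D_I)`. -/
def LPlusDI : Set (Module.End (L0 Ω μ) (DI D)) :=
  {a | ∃ b, IsAdjPairDI K D a b}

/-- `*`-subalgebras of operators on `D_I`. -/
def IsStarSubalgDI (A : Set (Module.End (L0 Ω μ) (DI D))) : Prop :=
  IsSubalgebraSet A ∧ ∀ a ∈ A, ∃ b ∈ A, IsAdjPairDI K D a b

/-- projections on `D_I`: idempotent and self-adjoint. -/
def IsProjDI (p : Module.End (L0 Ω μ) (DI D)) : Prop :=
  p * p = p ∧ IsAdjPairDI K D p p

/-- the range of `p` is concentrated on a single coordinate. -/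
def SingleCoordRange (p : Module.End (L0 Ω μ) (DI D)) : Prop :=
  ∃ i : I, ∀ (φ : DI D) (j : I), j ≠ i → p φ j = 0

/-- `M(A)`: rank one projections in `A` whose range generators have a unique
nonzero coordinate. -/
def MSet (A : Set (Module.End (L0 Ω μ) (DI D))) :
    Set (Module.End (L0 Ω μ) (DI D)) :=
  {p | p ∈ A ∧ IsProjDI K D p ∧ HomogOneOp p ∧ SingleCoordRange D p}

end DirectSum
/-- A Banach–Kantorovich space over `L⁰` with its `L⁰`-module structure. -/
structure BKSpace (Ω : Type) [MeasurableSpace Ω] (μ : Measure Ω)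
    (X : Type*) [AddCommGroup X] [Module (L0 Ω μ) X] where
  nrm : X → L0R Ω μ
  nrm_nonneg : ∀ x, 0 ≤ nrm x
  nrm_eq_zero : ∀ x, nrm x = 0 ↔ x = 0
  nrm_smul : ∀ (c : L0 Ω μ) (x : X), nrm (c • x) = absL c * nrm x
  nrm_triangle : ∀ x y, nrm (x + y) ≤ nrm x + nrm y
  ddecomp : DDecompN nrm
  complete : BOCompleteN nrm



/-! ### Auxiliary lemmas for Statement 10 -/

section Aux
variable {Ω : Type} [MeasurableSpace Ω] {μ : Measure Ω}

/-- conjugation as a ring homomorphism on `L⁰`. -/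
noncomputable def conjRH : L0 Ω μ →+* L0 Ω μ where
  toFun := conjL
  map_one' := by
    apply AEEqFun.ext
    filter_upwards [AEEqFun.coeFn_comp (starRingEnd ℂ) (by continuity) (1 : L0 Ω μ),
      AEEqFun.coeFn_one (β := ℂ) (μ := μ)] with x h1 h2
    simp [conjL, h1, h2]
  map_mul' := by
    intro a b
    apply AEEqFun.ext
    simp only [conjL]
    filter_upwards [AEEqFun.coeFn_comp (starRingEnd ℂ) (by continuity) (a * b),
      AEEqFun.coeFn_mul a b,
      AEEqFun.coeFn_mul (AEEqFun.comp (starRingEnd ℂ) (by continuity) a)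
        (AEEqFun.comp (starRingEnd ℂ) (by continuity) b),
      AEEqFun.coeFn_comp (starRingEnd ℂ) (by continuity) a,
      AEEqFun.coeFn_comp (starRingEnd ℂ) (by continuity) b] with x h1 h2 h3 h4 h5
    simp [h1, h2, h3, h4, h5]
  map_zero' := by
    apply AEEqFun.ext
    filter_upwards [AEEqFun.coeFn_comp (starRingEnd ℂ) (by continuity) (0 : L0 Ω μ),
      AEEqFun.coeFn_zero (β := ℂ) (μ := μ)] with x h1 h2
    simp [conjL, h1, h2]
  map_add' := by
    intro a b
    apply AEEqFun.ext
    simp only [conjL]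
    filter_upwards [AEEqFun.coeFn_comp (starRingEnd ℂ) (by continuity) (a + b),
      AEEqFun.coeFn_add a b,
      AEEqFun.coeFn_add (AEEqFun.comp (starRingEnd ℂ) (by continuity) a)
        (AEEqFun.comp (starRingEnd ℂ) (by continuity) b),
      AEEqFun.coeFn_comp (starRingEnd ℂ) (by continuity) a,
      AEEqFun.coeFn_comp (starRingEnd ℂ) (by continuity) b] with x h1 h2 h3 h4 h5
    simp [h1, h2, h3, h4, h5]

lemma conjRH_apply (a : L0 Ω μ) : conjRH a = conjL a := rfl

/-- a measurable representative of an element of `L⁰`. -/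
noncomputable def mrep (t : L0 Ω μ) : Ω → ℂ := (t.aemeasurable).mk ⇑t

lemma mrep_measurable (t : L0 Ω μ) : Measurable (mrep t) := (t.aemeasurable).measurable_mk

lemma mrep_ae (t : L0 Ω μ) : ⇑t =ᵐ[μ] mrep t := (t.aemeasurable).ae_eq_mk

lemma suppL_meas (t : L0 Ω μ) (u v : ℂ) :
    AEStronglyMeasurable (fun ω => if mrep t ω = 0 then u else v) μ := by
  have : Measurable (fun ω => if mrep t ω = 0 then u else v) := by
    refine Measurable.ite ?_ measurable_const measurable_const
    exact (mrep_measurable t) (MeasurableSet.singleton 0)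
  exact this.aestronglyMeasurable

/-- the support idempotent of `t ∈ L⁰`. -/
noncomputable def suppL (t : L0 Ω μ) : L0 Ω μ :=
  AEEqFun.mk (fun ω => if mrep t ω = 0 then (0 : ℂ) else 1) (suppL_meas t 0 1)

/-- pointwise inverse on the support, `1` off the support. -/
noncomputable def invL (t : L0 Ω μ) : L0 Ω μ :=
  AEEqFun.mk (fun ω => if mrep t ω = 0 then (1 : ℂ) else (mrep t ω)⁻¹)
    (by
      have : Measurable (fun ω => if mrep t ω = 0 then (1 : ℂ) else (mrep t ω)⁻¹) := by
        refine Measurable.ite ?_ measurable_const (mrep_measurable t).inv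
        exact (mrep_measurable t) (MeasurableSet.singleton 0)
      exact this.aestronglyMeasurable)

lemma suppL_idem (t : L0 Ω μ) : suppL t * suppL t = suppL t := by
  apply AEEqFun.ext
  filter_upwards [AEEqFun.coeFn_mul (suppL t) (suppL t),
    AEEqFun.coeFn_mk _ (suppL_meas t 0 1)] with x h1 h2
  simp only [h1, Pi.mul_apply, suppL] at *
  rw [h2]
  split_ifs <;> simp

lemma suppL_mul (t : L0 Ω μ) : suppL t * t = t := by
  apply AEEqFun.ext
  filter_upwards [AEEqFun.coeFn_mul (suppL t) t,
    AEEqFun.coeFn_mk _ (suppL_meas t 0 1), mrep_ae t] with x h1 h2 h3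
  simp only [h1, Pi.mul_apply, suppL] at *
  rw [h2, h3]
  split_ifs with h <;> simp [h]

lemma invL_mul (t : L0 Ω μ) : invL t * t = suppL t := by
  apply AEEqFun.ext
  have hm : Measurable (fun ω => if mrep t ω = 0 then (1 : ℂ) else (mrep t ω)⁻¹) := by
    refine Measurable.ite ?_ measurable_const (mrep_measurable t).inv
    exact (mrep_measurable t) (MeasurableSet.singleton 0)
  filter_upwards [AEEqFun.coeFn_mul (invL t) t,
    AEEqFun.coeFn_mk _ hm.aestronglyMeasurable,
    AEEqFun.coeFn_mk _ (suppL_meas t 0 1), mrep_ae t] with x h1 h2 h3 h4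
  simp only [h1, Pi.mul_apply, invL, suppL] at *
  rw [h2, h3, h4]
  split_ifs with h <;> simp [h, inv_mul_cancel₀]

lemma conjL_suppL (t : L0 Ω μ) : conjL (suppL t) = suppL t := by
  apply AEEqFun.ext
  simp only [conjL, suppL]
  filter_upwards [AEEqFun.coeFn_comp (starRingEnd ℂ) (by continuity)
      (AEEqFun.mk _ (suppL_meas t 0 1)),
    AEEqFun.coeFn_mk _ (suppL_meas t 0 1)] with x h1 h2
  rw [h1, Function.comp_apply, h2]
  split_ifs <;> simp

/-- telescoping identity for disjointification in a commutative ring. -/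
lemma telescope {R : Type*} [CommRing R] (s : ℕ → R) (n : ℕ) :
    ∑ i ∈ Finset.range n, s i * ∏ j ∈ Finset.range i, (1 - s j)
      = 1 - ∏ j ∈ Finset.range n, (1 - s j) := by
  induction n with
  | zero => simp
  | succ n ih => rw [Finset.sum_range_succ, Finset.prod_range_succ, ih]; ring

end Aux

section InnerAux
variable {X : Type*} [AddCommGroup X] [Module (L0 Ω μ) X]
variable (K : KHInner Ω μ X)

lemma inner_zero_left (y : X) : K.inner 0 y = 0 := by
  have h := K.smul_left 0 0 y
  rw [zero_smul, zero_mul] at h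
  exact h

lemma inner_zero_right (x : X) : K.inner x 0 = 0 := by
  rw [K.conj_symm, inner_zero_left, ← conjRH_apply, map_zero]

lemma inner_smul_right (c : L0 Ω μ) (x y : X) :
    K.inner x (c • y) = conjL c * K.inner x y := by
  rw [K.conj_symm, K.smul_left, ← conjRH_apply, map_mul, conjRH_apply, conjRH_apply,
    ← K.conj_symm]

lemma inner_sum_left {ι : Type*} (S : Finset ι) (u : ι → X) (y : X) :
    K.inner (∑ i ∈ S, u i) y = ∑ i ∈ S, K.inner (u i) y := by
  classical
  induction S using Finset.induction_on with
  | empty => simp [inner_zero_left]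
  | @insert a s h ih => rw [Finset.sum_insert h, K.add_left, ih, Finset.sum_insert h]

lemma inner_sum_right {ι : Type*} (S : Finset ι) (x : X) (v : ι → X) :
    K.inner x (∑ j ∈ S, v j) = ∑ j ∈ S, K.inner x (v j) := by
  rw [K.conj_symm, inner_sum_left, ← conjRH_apply, map_sum]
  exact Finset.sum_congr rfl fun j _ => by rw [conjRH_apply, ← K.conj_symm]

end InnerAux

section OpAux
variable {Ω : Type} [MeasurableSpace Ω] {μ : Measure Ω}
variable {X : Type*} [AddCommGroup X] [Module (L0 Ω μ) X]
variable {K : KHInner Ω μ X} {D : Submodule (L0 Ω μ) X}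

lemma rankOneE_apply (φ ψ η : D) :
    rankOneE K D φ ψ η = K.inner (η : X) (ψ : X) • φ := rfl

lemma mul_rankOneE (a : Module.End (L0 Ω μ) D) (φ ψ : D) :
    a * rankOneE K D φ ψ = rankOneE K D (a φ) ψ := by
  apply LinearMap.ext; intro η
  simp [Module.End.mul_apply, rankOneE_apply, LinearMap.map_smul]

lemma rankOneE_add_left (φ φ' ψ : D) :
    rankOneE K D (φ + φ') ψ = rankOneE K D φ ψ + rankOneE K D φ' ψ := by
  apply LinearMap.ext; intro η
  simp [rankOneE_apply, smul_add]

lemma rankOneE_smul_left (c : L0 Ω μ) (φ ψ : D) :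
    rankOneE K D (c • φ) ψ = c • rankOneE K D φ ψ := by
  apply LinearMap.ext; intro η
  simp only [rankOneE_apply, LinearMap.smul_apply, smul_smul, mul_comm]

lemma finGen_zero : FinGenOp (0 : Module.End (L0 Ω μ) D) :=
  ⟨0, Fin.elim0, fun _ => ⟨Fin.elim0, by simp⟩⟩

lemma finGen_rankOneE (φ ψ : D) : FinGenOp (rankOneE K D φ ψ) := by
  refine ⟨1, fun _ => φ, fun η => ⟨fun _ => K.inner (η : X) (ψ : X), by simp [rankOneE_apply]⟩⟩

lemma finGen_add {a b : Module.End (L0 Ω μ) D} (ha : FinGenOp a) (hb : FinGenOp b) :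
    FinGenOp (a + b) := by
  obtain ⟨n, g, hg⟩ := ha
  obtain ⟨m, g', hg'⟩ := hb
  refine ⟨n + m, Fin.append g g', fun x => ?_⟩
  obtain ⟨c, hc⟩ := hg x
  obtain ⟨c', hc'⟩ := hg' x
  refine ⟨Fin.append c c', ?_⟩
  rw [Fin.sum_univ_add]
  simp only [Fin.append_left, Fin.append_right]
  simp [LinearMap.add_apply, hc, hc']

lemma finGen_smul (c : L0 Ω μ) {a : Module.End (L0 Ω μ) D} (ha : FinGenOp a) :
    FinGenOp (c • a) := by
  obtain ⟨n, g, hg⟩ := ha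
  refine ⟨n, g, fun x => ?_⟩
  obtain ⟨d, hd⟩ := hg x
  exact ⟨fun i => c * d i, by simp [LinearMap.smul_apply, hd, Finset.smul_sum, smul_smul]⟩

lemma finGen_mul_left {a : Module.End (L0 Ω μ) D} (b : Module.End (L0 Ω μ) D)
    (ha : FinGenOp a) : FinGenOp (a * b) := by
  obtain ⟨n, g, hg⟩ := ha
  exact ⟨n, g, fun x => hg (b x)⟩

lemma finGen_mul_right (a : Module.End (L0 Ω μ) D) {b : Module.End (L0 Ω μ) D}
    (hb : FinGenOp b) : FinGenOp (a * b) := by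
  obtain ⟨n, g, hg⟩ := hb
  refine ⟨n, fun i => a (g i), fun x => ?_⟩
  obtain ⟨c, hc⟩ := hg x
  refine ⟨c, ?_⟩
  rw [Module.End.mul_apply, hc, map_sum]
  exact Finset.sum_congr rfl fun i _ => (map_smul a _ _)

/-- the crux: a fin-generated idempotent with full support admits vectors
`ζ, f` with `⟨qζ, f⟩ = 1`. -/
lemma crux (q : Module.End (L0 Ω μ) D) (hq : FinGenOp q) (hqq : q * q = q)
    (hfull : ∀ π : L0 Ω μ, π • q = 0 → π = 0) :
    ∃ ζ f : D, K.inner ((q ζ : D) : X) ((f : D) : X) = 1 := by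
  classical
  obtain ⟨n, g, hg⟩ := hq
  set G : ℕ → D := fun i => if hh : i < n then g ⟨i, hh⟩ else 0 with hG
  set h : ℕ → D := fun i => q (G i) with hh
  set t : ℕ → L0 Ω μ := fun i => K.inner ((h i : D) : X) ((h i : D) : X) with ht
  set s : ℕ → L0 Ω μ := fun i => suppL (t i) with hs
  set w : ℕ → L0 Ω μ := fun i => invL (t i) with hw
  set P : ℕ → L0 Ω μ := fun i => s i * ∏ j ∈ Finset.range i, (1 - s j) with hP
  have hPdef : ∀ k, P k = s k * ∏ j ∈ Finset.range k, (1 - s j) := fun _ => rfl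
  have hsdef : ∀ k, s k = suppL (t k) := fun _ => rfl
  have htdef : ∀ k, t k = K.inner ((h k : D) : X) ((h k : D) : X) := fun _ => rfl
  -- span fact
  have hspan : ∀ η : D, ∃ C : ℕ → L0 Ω μ, q η = ∑ i ∈ Finset.range n, C i • h i := by
    intro η
    obtain ⟨c, hc⟩ := hg η
    refine ⟨fun i => if hh : i < n then c ⟨i, hh⟩ else 0, ?_⟩
    have hq2 : q η = q (q η) := by rw [← Module.End.mul_apply, hqq]
    rw [hq2, hc, map_sum,
      ← Fin.sum_univ_eq_sum_range (fun i => (if hh : i < n then c ⟨i, hh⟩ else 0) • h i) n]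
    refine Finset.sum_congr rfl fun i _ => ?_
    have hGi : G (i : ℕ) = g i := by simp [hG, i.isLt]
    rw [LinearMap.map_smul, dif_pos i.isLt]
    simp only [hh]
    rw [hGi]
  -- idempotent facts
  have hsidem : ∀ i, s i * s i = s i := fun i => suppL_idem (t i)
  have hst : ∀ i, s i * t i = t i := fun i => suppL_mul (t i)
  have hwt : ∀ i, w i * t i = s i := fun i => invL_mul (t i)
  -- the product of complements kills q
  have hprod0 : (∏ j ∈ Finset.range n, (1 - s j)) = 0 := by
    set Q : L0 Ω μ := ∏ j ∈ Finset.range n, (1 - s j) with hQ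
    apply hfull
    apply LinearMap.ext; intro η
    obtain ⟨C, hC⟩ := hspan η
    rw [LinearMap.smul_apply, hC, Finset.smul_sum, LinearMap.zero_apply]
    refine Finset.sum_eq_zero fun i hi => ?_
    have hQt : Q * t i = 0 := by
      have h1 : (1 - s i) * t i = 0 := by
        rw [sub_mul, one_mul, hst, sub_self]
      calc Q * t i
          = ((1 - s i) * ∏ x ∈ (Finset.range n).erase i, (1 - s x)) * t i := by
            rw [hQ, ← Finset.mul_prod_erase _ _ hi]
        _ = (∏ x ∈ (Finset.range n).erase i, (1 - s x)) * ((1 - s i) * t i) := by ring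
        _ = 0 := by rw [h1, mul_zero]
    have hQh : Q • h i = 0 := by
      have hin : K.inner ((Q • h i : D) : X) ((Q • h i : D) : X) = 0 := by
        rw [Submodule.coe_smul, K.smul_left, inner_smul_right, ← htdef]
        calc Q * (conjL Q * t i) = conjL Q * (Q * t i) := by ring
          _ = 0 := by rw [hQt, mul_zero]
      have := K.definite _ hin
      exact Subtype.ext (by simpa using this)
    rw [smul_smul, mul_comm, ← smul_smul, hQh, smul_zero]
  -- the partition sums to one
  have hone : ∑ i ∈ Finset.range n, P i = 1 := by
    simp only [hPdef]
    rw [telescope s n, hprod0, sub_zero]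
  -- disjointness and idempotency of P
  have hPdisj : ∀ i j, i < j → P i * P j = 0 := by
    intro i j hij
    have hmem : i ∈ Finset.range j := Finset.mem_range.mpr hij
    have key : s i * (1 - s i) = 0 := by
      rw [mul_sub, mul_one, hsidem, sub_self]
    calc P i * P j
        = (s i * ∏ x ∈ Finset.range i, (1 - s x)) *
            (s j * ((1 - s i) * ∏ x ∈ (Finset.range j).erase i, (1 - s x))) := by
          rw [hPdef i, hPdef j, ← Finset.mul_prod_erase _ _ hmem]
      _ = (s i * (1 - s i)) * ((∏ x ∈ Finset.range i, (1 - s x)) * s j *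
            ∏ x ∈ (Finset.range j).erase i, (1 - s x)) := by ring
      _ = 0 := by rw [key, zero_mul]
  have hPidem : ∀ i, P i * P i = P i := by
    intro i
    have hprodidem : (∏ j ∈ Finset.range i, (1 - s j)) * (∏ j ∈ Finset.range i, (1 - s j))
        = ∏ j ∈ Finset.range i, (1 - s j) := by
      rw [← Finset.prod_mul_distrib]
      refine Finset.prod_congr rfl fun j _ => ?_
      linear_combination hsidem j
    calc P i * P i
        = (s i * s i) * ((∏ j ∈ Finset.range i, (1 - s j)) *
            ∏ j ∈ Finset.range i, (1 - s j)) := by rw [hPdef i]; ring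
      _ = P i := by rw [hsidem, hprodidem, ← hPdef]
  have hPs : ∀ i, P i * s i = P i := by
    intro i
    calc P i * s i
        = (s i * s i) * ∏ j ∈ Finset.range i, (1 - s j) := by rw [hPdef i]; ring
      _ = P i := by rw [hsidem, ← hPdef]
  have hPconj : ∀ i, conjL (P i) = P i := by
    intro i
    rw [hPdef i]
    simp only [hsdef]
    rw [← conjRH_apply, map_mul, map_prod]
    simp only [map_sub, map_one, conjRH_apply, conjL_suppL]
  -- the vectors
  refine ⟨∑ i ∈ Finset.range n, (P i * w i) • G i, ∑ j ∈ Finset.range n, P j • h j, ?_⟩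
  have hqζ : q (∑ i ∈ Finset.range n, (P i * w i) • G i)
      = ∑ i ∈ Finset.range n, (P i * w i) • h i := by
    rw [map_sum]
    exact Finset.sum_congr rfl fun i _ => LinearMap.map_smul q _ _
  rw [hqζ]
  have hcoe1 : ((∑ i ∈ Finset.range n, (P i * w i) • h i : D) : X)
      = ∑ i ∈ Finset.range n, (P i * w i) • ((h i : D) : X) := by
    rw [AddSubmonoidClass.coe_finset_sum]
    exact Finset.sum_congr rfl fun i _ => rfl
  have hcoe2 : ((∑ j ∈ Finset.range n, P j • h j : D) : X)
      = ∑ j ∈ Finset.range n, P j • ((h j : D) : X) := by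
    rw [AddSubmonoidClass.coe_finset_sum]
    exact Finset.sum_congr rfl fun j _ => rfl
  rw [hcoe1, hcoe2, inner_sum_left, ← hone]
  refine Finset.sum_congr rfl fun i hi => ?_
  rw [K.smul_left, inner_sum_right, Finset.mul_sum]
  have hoff : ∀ j ∈ Finset.range n, j ≠ i →
      P i * w i * K.inner ((h i : D) : X) (P j • ((h j : D) : X)) = 0 := by
    intro j _ hji
    rw [inner_smul_right, hPconj]
    have hdisj : P i * P j = 0 := by
      rcases lt_or_gt_of_ne (Ne.symm hji) with hlt | hgt
      · exact hPdisj i j hlt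
      · rw [mul_comm]; exact hPdisj j i hgt
    calc P i * w i * (P j * K.inner ((h i : D) : X) ((h j : D) : X))
        = (P i * P j) * (w i * K.inner ((h i : D) : X) ((h j : D) : X)) := by ring
      _ = 0 := by rw [hdisj, zero_mul]
  rw [Finset.sum_eq_single_of_mem i hi hoff]
  rw [inner_smul_right, hPconj, ← htdef]
  calc P i * w i * (P i * t i)
      = (P i * P i) * (w i * t i) := by ring
    _ = P i * s i := by rw [hPidem, hwt]
    _ = P i := hPs i
end OpAux

/-- Every `L⁰`-linear automorphism of the algebra `F(D)` of
finite-generated `L⁰`-linear operators on `D` is spatial: `α(a) = x a x⁻¹` for an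
invertible `x ∈ L(D)`. -/
theorem statement10 {X : Type*} [AddCommGroup X] [Module (L0 Ω μ) X]
    (K : KHInner Ω μ X) (hK : K.IsKH) (D : Submodule (L0 Ω μ) X)
    (hD : BODenseN K.knorm (D : Set X))
    (e : D) (he : K.knorm (e : X) = 1)
    (α : Module.End (L0 Ω μ) D → Module.End (L0 Ω μ) D)
    (hbij : Set.BijOn α {a | FinGenOp a} {a | FinGenOp a})
    (hadd : ∀ a, FinGenOp a → ∀ b, FinGenOp b → α (a + b) = α a + α b)
    (hsmul : ∀ c : L0 Ω μ, ∀ a, FinGenOp a → α (c • a) = c • α a)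
    (hmul : ∀ a, FinGenOp a → ∀ b, FinGenOp b → α (a * b) = α a * α b) :
    ∃ x y : Module.End (L0 Ω μ) D, x * y = 1 ∧ y * x = 1 ∧
      ∀ a, FinGenOp a → α a = x * a * y := by
  classical
  -- Step 1: `⟨e,e⟩ = 1`.
  have hre : reL (K.inner (e : X) (e : X)) = 1 := by
    have hs : sqrtL (reL (K.inner (e : X) (e : X))) = 1 := he
    rw [AEEqFun.ext_iff] at hs ⊢
    simp only [sqrtL] at hs
    have hcomp := AEEqFun.coeFn_comp Real.sqrt Real.continuous_sqrt
      (reL (K.inner (e : X) (e : X)))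
    filter_upwards [hs, hcomp, AEEqFun.coeFn_one (β := ℝ) (μ := μ)] with ω h1 h2 h3
    rw [h3]
    rw [h2] at h1
    rw [h3] at h1
    exact Real.sqrt_eq_one.mp h1
  have he1 : K.inner (e : X) (e : X) = 1 := by
    rw [K.self_real, hre]
    apply AEEqFun.ext
    simp only [ofRealL]
    have hcomp := AEEqFun.coeFn_comp Complex.ofReal Complex.continuous_ofReal (1 : L0R Ω μ)
    filter_upwards [hcomp, AEEqFun.coeFn_one (β := ℝ) (μ := μ),
      AEEqFun.coeFn_one (β := ℂ) (μ := μ)] with ω h1 h2 h3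
    rw [h1, h3, Function.comp_apply, h2]
    simp
  -- Step 2: the rank one idempotent `p = e ⊗ e`.
  have hpfin : FinGenOp (rankOneE K D e e) := finGen_rankOneE e e
  have hpe : rankOneE K D e e e = e := by rw [rankOneE_apply, he1, one_smul]
  have hpp : rankOneE K D e e * rankOneE K D e e = rankOneE K D e e := by
    apply LinearMap.ext; intro η
    rw [Module.End.mul_apply, rankOneE_apply e e η, LinearMap.map_smul, hpe]
  -- Step 3: `α 0 = 0` and the inverse map `β`.
  have hα0 : α 0 = 0 := by
    have h := hadd 0 finGen_zero 0 finGen_zero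
    rw [add_zero] at h
    exact left_eq_add.mp h
  have hchoice : ∀ b : Module.End (L0 Ω μ) D, ∃ a, FinGenOp b → FinGenOp a ∧ α a = b := by
    intro b
    by_cases hb : FinGenOp b
    · obtain ⟨a, ha, hab⟩ := hbij.surjOn hb
      exact ⟨a, fun _ => ⟨ha, hab⟩⟩
    · exact ⟨0, fun hcon => absurd hcon hb⟩
  choose β hβ using hchoice
  have hβfin : ∀ b, FinGenOp b → FinGenOp (β b) := fun b hb => (hβ b hb).1
  have hαβ : ∀ b, FinGenOp b → α (β b) = b := fun b hb => (hβ b hb).2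
  have hβα : ∀ a, FinGenOp a → β (α a) = a := by
    intro a ha
    have hfa : FinGenOp (α a) := hbij.mapsTo ha
    exact hbij.injOn (hβfin _ hfa) ha (by rw [hαβ _ hfa])
  have hβmul : ∀ A B, FinGenOp A → FinGenOp B → β (A * B) = β A * β B := by
    intro A B hA hB
    have hAB : FinGenOp (A * B) := finGen_mul_left B hA
    refine hbij.injOn (hβfin _ hAB) (finGen_mul_left (β B) (hβfin _ hA)) ?_
    rw [hαβ _ hAB, hmul _ (hβfin _ hA) _ (hβfin _ hB), hαβ _ hA, hαβ _ hB]
  have hβadd : ∀ A B, FinGenOp A → FinGenOp B → β (A + B) = β A + β B := by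
    intro A B hA hB
    have hAB : FinGenOp (A + B) := finGen_add hA hB
    refine hbij.injOn (hβfin _ hAB) (finGen_add (hβfin _ hA) (hβfin _ hB)) ?_
    rw [hαβ _ hAB, hadd _ (hβfin _ hA) _ (hβfin _ hB), hαβ _ hA, hαβ _ hB]
  have hβsmul : ∀ (c : L0 Ω μ) A, FinGenOp A → β (c • A) = c • β A := by
    intro c A hA
    have hcA : FinGenOp (c • A) := finGen_smul c hA
    refine hbij.injOn (hβfin _ hcA) (finGen_smul c (hβfin _ hA)) ?_
    rw [hαβ _ hcA, hsmul c _ (hβfin _ hA), hαβ _ hA]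
  -- Step 4: `q = α p` is a fin-generated idempotent with full support.
  have hqfin : FinGenOp (α (rankOneE K D e e)) := hbij.mapsTo hpfin
  have hqq : α (rankOneE K D e e) * α (rankOneE K D e e) = α (rankOneE K D e e) := by
    rw [← hmul _ hpfin _ hpfin, hpp]
  have hfull : ∀ π : L0 Ω μ, π • α (rankOneE K D e e) = 0 → π = 0 := by
    intro π h0
    have h1 : α (π • rankOneE K D e e) = 0 := by
      rw [hsmul π _ hpfin, h0]
    have h2 : π • rankOneE K D e e = 0 :=
      hbij.injOn (finGen_smul π hpfin) finGen_zero (by rw [h1, hα0])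
    have h3 : π • e = (0 : D) := by
      have h4 := LinearMap.congr_fun h2 e
      rw [LinearMap.smul_apply, hpe, LinearMap.zero_apply] at h4
      exact h4
    have h5 : K.inner ((π • e : D) : X) (e : X) = 0 := by
      rw [h3]
      simpa using inner_zero_left K ((e : D) : X)
    rw [Submodule.coe_smul, K.smul_left, he1, mul_one] at h5
    exact h5
  -- Step 5: the special vectors `ζ, f`.
  obtain ⟨ζ, f, hζf⟩ := crux (K := K) (α (rankOneE K D e e)) hqfin hqq hfull
  -- Step 6: the implementing operators.
  let x : Module.End (L0 Ω μ) D :=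
    { toFun := fun φ => α (rankOneE K D φ e) ζ
      map_add' := by
        intro φ φ'
        show α (rankOneE K D (φ + φ') e) ζ = α (rankOneE K D φ e) ζ + α (rankOneE K D φ' e) ζ
        rw [rankOneE_add_left,
          hadd _ (finGen_rankOneE φ e) _ (finGen_rankOneE φ' e), LinearMap.add_apply]
      map_smul' := by
        intro c φ
        show α (rankOneE K D (c • φ) e) ζ = c • α (rankOneE K D φ e) ζ
        rw [rankOneE_smul_left, hsmul c _ (finGen_rankOneE φ e), LinearMap.smul_apply] }
  let y : Module.End (L0 Ω μ) D :=
    { toFun := fun ψ => β (rankOneE K D ψ f) e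
      map_add' := by
        intro ψ ψ'
        show β (rankOneE K D (ψ + ψ') f) e = β (rankOneE K D ψ f) e + β (rankOneE K D ψ' f) e
        rw [rankOneE_add_left,
          hβadd _ _ (finGen_rankOneE ψ f) (finGen_rankOneE ψ' f), LinearMap.add_apply]
      map_smul' := by
        intro c ψ
        show β (rankOneE K D (c • ψ) f) e = c • β (rankOneE K D ψ f) e
        rw [rankOneE_smul_left, hβsmul c _ (finGen_rankOneE ψ f), LinearMap.smul_apply] }
  have hxap : ∀ φ : D, x φ = α (rankOneE K D φ e) ζ := fun _ => rfl
  have hyap : ∀ ψ : D, y ψ = β (rankOneE K D ψ f) e := fun _ => rfl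
  -- Step 7: `x * y = 1`.
  have hxy : x * y = 1 := by
    apply LinearMap.ext; intro ψ
    rw [Module.End.mul_apply, Module.End.one_apply, hxap, hyap]
    rw [show rankOneE K D (β (rankOneE K D ψ f) e) e
        = β (rankOneE K D ψ f) * rankOneE K D e e from (mul_rankOneE _ e e).symm]
    rw [hmul _ (hβfin _ (finGen_rankOneE ψ f)) _ hpfin]
    rw [hαβ _ (finGen_rankOneE ψ f)]
    rw [Module.End.mul_apply, rankOneE_apply, hζf, one_smul]
  -- Step 8: `y * x = d • 1` and `d = 1`.
  have hyx : ∀ φ : D, (y * x) φ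
      = K.inner ((β (rankOneE K D ζ f) e : D) : X) (e : X) • φ := by
    intro φ
    rw [Module.End.mul_apply, hxap, hyap]
    rw [show rankOneE K D (α (rankOneE K D φ e) ζ) f
        = α (rankOneE K D φ e) * rankOneE K D ζ f from (mul_rankOneE _ ζ f).symm]
    rw [hβmul _ _ (hbij.mapsTo (finGen_rankOneE φ e)) (finGen_rankOneE ζ f)]
    rw [hβα _ (finGen_rankOneE φ e)]
    rw [Module.End.mul_apply, rankOneE_apply]
  have hdx : K.inner ((β (rankOneE K D ζ f) e : D) : X) (e : X) • x = x := by
    have h1 : x * (y * x)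
        = K.inner ((β (rankOneE K D ζ f) e : D) : X) (e : X) • x := by
      apply LinearMap.ext; intro φ
      rw [Module.End.mul_apply, hyx φ, LinearMap.map_smul, LinearMap.smul_apply]
    rw [← mul_assoc, hxy, one_mul] at h1
    exact h1.symm
  have hxe : x e = α (rankOneE K D e e) ζ := hxap e
  have hd1 : K.inner ((β (rankOneE K D ζ f) e : D) : X) (e : X) = 1 := by
    have h2 : K.inner ((β (rankOneE K D ζ f) e : D) : X) (e : X)
        • (α (rankOneE K D e e) ζ) = α (rankOneE K D e e) ζ := by
      have h3 := congrArg (fun z : Module.End (L0 Ω μ) D => z e) hdx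
      simpa [LinearMap.smul_apply, hxe] using h3
    have h4 := congrArg (fun v : D => K.inner ((v : D) : X) ((f : D) : X)) h2
    simpa [Submodule.coe_smul, K.smul_left, hζf, mul_one] using h4
  -- Step 9: conclusion.
  refine ⟨x, y, hxy, ?_, ?_⟩
  · apply LinearMap.ext; intro φ
    rw [hyx φ, hd1, one_smul, Module.End.one_apply]
  · intro a ha
    apply LinearMap.ext; intro ψ
    rw [Module.End.mul_apply, Module.End.mul_apply, hxap]
    rw [show rankOneE K D (a (y ψ)) e
        = a * rankOneE K D (y ψ) e from (mul_rankOneE a _ e).symm]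
    rw [hmul a ha _ (finGen_rankOneE _ e), Module.End.mul_apply]
    rw [← hxap]
    have h2 : x (y ψ) = ψ := by
      have h3 := congrArg (fun z : Module.End (L0 Ω μ) D => z ψ) hxy
      simpa [Module.End.mul_apply] using h3
    rw [h2]

end KHPaper
end

section
/- Let X be a Kaplansky–Hilbert module over L^0. Then for every L^0-bounded L^0-linear functional f: X → L^0 there exists a unique ψ ∈ X such that f(φ) = ⟨φ,ψ⟩ for all φ ∈ X. -/
open MeasureTheory

namespace KHPaper

variable {Ω : Type} [MeasurableSpace Ω] {μ : Measure Ω}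

section RieszAux

open MeasureTheory

variable {Ω : Type} [MeasurableSpace Ω] {μ : Measure Ω}

/-! ### pointwise characterizations of the primitive operations -/

lemma absL_coe (g : L0 Ω μ) : ∀ᵐ ω ∂μ, absL g ω = ‖g ω‖ :=
  (AEEqFun.coeFn_comp _ _ g).mono fun ω h => h

lemma reL_coe (g : L0 Ω μ) : ∀ᵐ ω ∂μ, reL g ω = (g ω).re :=
  (AEEqFun.coeFn_comp _ _ g).mono fun ω h => h

lemma conjL_coe (g : L0 Ω μ) : ∀ᵐ ω ∂μ, conjL g ω = (starRingEnd ℂ) (g ω) :=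
  (AEEqFun.coeFn_comp _ _ g).mono fun ω h => h

lemma ofRealL_coe (g : L0R Ω μ) : ∀ᵐ ω ∂μ, ofRealL g ω = (g ω : ℂ) :=
  (AEEqFun.coeFn_comp _ _ g).mono fun ω h => h

lemma sqrtL_coe (g : L0R Ω μ) : ∀ᵐ ω ∂μ, sqrtL g ω = Real.sqrt (g ω) :=
  (AEEqFun.coeFn_comp _ _ g).mono fun ω h => h

lemma L0R_le_iff {g h : L0R Ω μ} : g ≤ h ↔ ∀ᵐ ω ∂μ, g ω ≤ h ω :=
  AEEqFun.coeFn_le.symm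

lemma L0R_nonneg_iff {g : L0R Ω μ} : 0 ≤ g ↔ ∀ᵐ ω ∂μ, 0 ≤ g ω := by
  rw [L0R_le_iff]
  constructor <;> intro h <;> filter_upwards [h, AEEqFun.coeFn_zero (β := ℝ) (μ := μ)] with ω h1 h2
  · rw [h2] at h1; exact h1
  · rw [h2]; exact h1

/-! ### algebraic lemmas for `conjL` -/

lemma conjL_add (a b : L0 Ω μ) : conjL (a + b) = conjL a + conjL b := by
  apply AEEqFun.ext
  filter_upwards [conjL_coe (a + b), conjL_coe a, conjL_coe b, AEEqFun.coeFn_add a b,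
    AEEqFun.coeFn_add (conjL a) (conjL b)] with ω h1 h2 h3 h4 h5
  rw [h1, h5, Pi.add_apply, h2, h3, h4, Pi.add_apply, map_add]

lemma conjL_mul (a b : L0 Ω μ) : conjL (a * b) = conjL a * conjL b := by
  apply AEEqFun.ext
  filter_upwards [conjL_coe (a * b), conjL_coe a, conjL_coe b, AEEqFun.coeFn_mul a b,
    AEEqFun.coeFn_mul (conjL a) (conjL b)] with ω h1 h2 h3 h4 h5
  rw [h1, h5, Pi.mul_apply, h2, h3, h4, Pi.mul_apply, map_mul]

lemma conjL_zero : conjL (0 : L0 Ω μ) = 0 := by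
  apply AEEqFun.ext
  filter_upwards [conjL_coe (0 : L0 Ω μ), AEEqFun.coeFn_zero (β := ℂ) (μ := μ)] with ω h1 h2
  rw [h1, h2]; simp

lemma conjL_one : conjL (1 : L0 Ω μ) = 1 := by
  apply AEEqFun.ext
  filter_upwards [conjL_coe (1 : L0 Ω μ), AEEqFun.coeFn_one (β := ℂ) (μ := μ)] with ω h1 h2
  rw [h1, h2]; simp

lemma conjL_sub (a b : L0 Ω μ) : conjL (a - b) = conjL a - conjL b := by
  apply AEEqFun.ext
  filter_upwards [conjL_coe (a - b), conjL_coe a, conjL_coe b, AEEqFun.coeFn_sub a b,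
    AEEqFun.coeFn_sub (conjL a) (conjL b)] with ω h1 h2 h3 h4 h5
  rw [h1, h5, Pi.sub_apply, h2, h3, h4, Pi.sub_apply, map_sub]

/-! ### inner product algebra -/

variable {X : Type*} [AddCommGroup X] [Module (L0 Ω μ) X]

namespace KHInner

variable (K : KHInner Ω μ X)

lemma inner_zero_left (y : X) : K.inner 0 y = 0 := by
  have h := K.add_left 0 0 y
  rw [add_zero] at h
  exact right_eq_add.mp h

lemma inner_zero_right (x : X) : K.inner x 0 = 0 := by
  rw [K.conj_symm, K.inner_zero_left, conjL_zero]

lemma inner_sub_left (x y z : X) : K.inner (x - y) z = K.inner x z - K.inner y z := by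
  have h := K.add_left (x - y) y z
  rw [sub_add_cancel] at h
  rw [eq_comm, sub_eq_iff_eq_add, ← h]

lemma inner_add_right (x y z : X) : K.inner x (y + z) = K.inner x y + K.inner x z := by
  rw [K.conj_symm, K.add_left, conjL_add, ← K.conj_symm, ← K.conj_symm]

lemma inner_sub_right (x y z : X) : K.inner x (y - z) = K.inner x y - K.inner x z := by
  rw [K.conj_symm, K.inner_sub_left, conjL_sub, ← K.conj_symm, ← K.conj_symm]

lemma inner_smul_right (c : L0 Ω μ) (x y : X) :
    K.inner x (c • y) = conjL c * K.inner x y := by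
  rw [K.conj_symm, K.smul_left, conjL_mul, ← K.conj_symm]

lemma inner_neg_neg (x : X) : K.inner (-x) (-x) = K.inner x x := by
  have h1 : (-x) = (0 : X) - x := (zero_sub x).symm
  rw [h1, K.inner_sub_left, K.inner_sub_right, K.inner_sub_right]
  simp only [K.inner_zero_left, K.inner_zero_right]
  ring

/-- full sesquilinear expansion. -/
lemma inner_expand (a b : X) (s t : L0 Ω μ) :
    K.inner (s • a + t • b) (s • a + t • b) =
      s * conjL s * K.inner a a + s * conjL t * K.inner a b +
        t * conjL s * K.inner b a + t * conjL t * K.inner b b := by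
  rw [K.add_left, K.inner_add_right, K.inner_add_right, K.smul_left, K.smul_left,
    K.inner_smul_right, K.inner_smul_right, K.inner_smul_right, K.inner_smul_right,
    K.smul_left, K.smul_left]
  ring

lemma inner_add_add (x y : X) :
    K.inner (x + y) (x + y) =
      K.inner x x + K.inner x y + K.inner y x + K.inner y y := by
  rw [K.add_left, K.inner_add_right, K.inner_add_right]
  ring

lemma inner_sub_sub (x y : X) :
    K.inner (x - y) (x - y) =
      K.inner x x - K.inner x y - K.inner y x + K.inner y y := by
  rw [K.inner_sub_left, K.inner_sub_right, K.inner_sub_right]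
  ring

lemma nn_nonneg_ae (x : X) : ∀ᵐ ω ∂μ, 0 ≤ reL (K.inner x x) ω := by
  have h := K.self_nonneg x
  exact L0R_nonneg_iff.mp h

lemma knorm_coe (x : X) : ∀ᵐ ω ∂μ, K.knorm x ω = Real.sqrt (reL (K.inner x x) ω) :=
  sqrtL_coe _

lemma knorm_sq_ae (x : X) :
    ∀ᵐ ω ∂μ, K.knorm x ω * K.knorm x ω = reL (K.inner x x) ω ∧ 0 ≤ K.knorm x ω := by
  filter_upwards [K.knorm_coe x, K.nn_nonneg_ae x] with ω h1 h2
  rw [h1]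
  exact ⟨Real.mul_self_sqrt h2, Real.sqrt_nonneg _⟩

end KHInner

end RieszAux

section RieszAux2

open MeasureTheory

variable {Ω : Type} [MeasurableSpace Ω] {μ : Measure Ω}
variable {X : Type*} [AddCommGroup X] [Module (L0 Ω μ) X]

/-- indicator (as a complex idempotent) of the set where a real `L⁰` function is `≤ 0`. -/
noncomputable def indC (h : L0R Ω μ) : L0 Ω μ :=
  AEEqFun.mk (fun ω => if h ω ≤ 0 then (1 : ℂ) else 0)
    ((Measurable.ite (measurableSet_le h.measurable measurable_const) measurable_const
      measurable_const).aestronglyMeasurable)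

lemma indC_coe (h : L0R Ω μ) :
    ∀ᵐ ω ∂μ, indC h ω = if h ω ≤ 0 then (1 : ℂ) else 0 :=
  AEEqFun.coeFn_mk _ _

/-- the quadratic functional `Q(x) = ‖x‖² - 2 Re f(x)`. -/
noncomputable def QFf (K : KHInner Ω μ X) (f : X →ₗ[L0 Ω μ] L0 Ω μ) (x : X) : L0R Ω μ :=
  reL (K.inner x x) - (2 : ℝ) • reL (f x)

lemma QFf_coe (K : KHInner Ω μ X) (f : X →ₗ[L0 Ω μ] L0 Ω μ) (x : X) :
    ∀ᵐ ω ∂μ, QFf K f x ω = (K.inner x x ω).re - 2 * (f x ω).re := by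
  filter_upwards [AEEqFun.coeFn_sub (reL (K.inner x x)) ((2 : ℝ) • reL (f x)),
    AEEqFun.coeFn_smul (2 : ℝ) (reL (f x)), reL_coe (K.inner x x), reL_coe (f x)]
    with ω h1 h2 h3 h4
  rw [QFf, h1, Pi.sub_apply, h2, Pi.smul_apply, h3, h4, smul_eq_mul]

lemma QFf_zero (K : KHInner Ω μ X) (f : X →ₗ[L0 Ω μ] L0 Ω μ) : QFf K f 0 = 0 := by
  rw [QFf, K.inner_zero_left, map_zero]
  apply AEEqFun.ext
  filter_upwards [AEEqFun.coeFn_sub (reL (0 : L0 Ω μ)) ((2 : ℝ) • reL (0 : L0 Ω μ)),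
    AEEqFun.coeFn_smul (2 : ℝ) (reL (0 : L0 Ω μ)), reL_coe (0 : L0 Ω μ),
    AEEqFun.coeFn_zero (β := ℂ) (μ := μ), AEEqFun.coeFn_zero (β := ℝ) (μ := μ)]
    with ω h1 h2 h3 h4 h5
  rw [h1, Pi.sub_apply, h2, Pi.smul_apply, h3, h4, h5]
  simp

/-- mixing two vectors along the indicator of `{Q x ≤ Q x'}` realizes the minimum of the
two values of `Q`. -/
lemma mix_exists (K : KHInner Ω μ X) (f : X →ₗ[L0 Ω μ] L0 Ω μ) (x x' : X) :
    ∃ z : X, QFf K f z = QFf K f x ⊓ QFf K f x' := by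
  set π : L0 Ω μ := indC (QFf K f x - QFf K f x') with hπ
  refine ⟨π • x + (1 - π) • x', ?_⟩
  set A : L0 Ω μ := π * conjL π * K.inner x x + π * conjL (1 - π) * K.inner x x' +
      (1 - π) * conjL π * K.inner x' x + (1 - π) * conjL (1 - π) * K.inner x' x' with hA
  set B : L0 Ω μ := π * f x + (1 - π) * f x' with hB
  have hexp : K.inner (π • x + (1 - π) • x') (π • x + (1 - π) • x') = A :=
    K.inner_expand x x' π (1 - π)
  have hfz : f (π • x + (1 - π) • x') = B := by
    rw [hB, map_add, LinearMap.map_smul, LinearMap.map_smul, smul_eq_mul, smul_eq_mul]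
  have hz : QFf K f (π • x + (1 - π) • x') = reL A - (2 : ℝ) • reL B := by
    rw [QFf, hexp, hfz]
  apply AEEqFun.ext
  rw [hz]
  filter_upwards [AEEqFun.coeFn_sub (reL A) ((2 : ℝ) • reL B),
    AEEqFun.coeFn_smul (2 : ℝ) (reL B), reL_coe A, reL_coe B,
    QFf_coe K f x, QFf_coe K f x',
    AEEqFun.coeFn_inf (QFf K f x) (QFf K f x'),
    AEEqFun.coeFn_sub (QFf K f x) (QFf K f x'),
    indC_coe (QFf K f x - QFf K f x'),
    AEEqFun.coeFn_add (π * conjL π * K.inner x x + π * conjL (1 - π) * K.inner x x' +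
      (1 - π) * conjL π * K.inner x' x) ((1 - π) * conjL (1 - π) * K.inner x' x'),
    AEEqFun.coeFn_add (π * conjL π * K.inner x x + π * conjL (1 - π) * K.inner x x')
      ((1 - π) * conjL π * K.inner x' x),
    AEEqFun.coeFn_add (π * conjL π * K.inner x x) (π * conjL (1 - π) * K.inner x x'),
    AEEqFun.coeFn_mul (π * conjL π) (K.inner x x),
    AEEqFun.coeFn_mul (π * conjL (1 - π)) (K.inner x x'),
    AEEqFun.coeFn_mul ((1 - π) * conjL π) (K.inner x' x),
    AEEqFun.coeFn_mul ((1 - π) * conjL (1 - π)) (K.inner x' x'),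
    AEEqFun.coeFn_mul π (conjL π),
    AEEqFun.coeFn_mul π (conjL (1 - π)),
    AEEqFun.coeFn_mul (1 - π) (conjL π),
    AEEqFun.coeFn_mul (1 - π) (conjL (1 - π)),
    conjL_coe π, conjL_coe (1 - π),
    AEEqFun.coeFn_sub (1 : L0 Ω μ) π, AEEqFun.coeFn_one (β := ℂ) (μ := μ),
    AEEqFun.coeFn_add (π * f x) ((1 - π) * f x'),
    AEEqFun.coeFn_mul π (f x), AEEqFun.coeFn_mul (1 - π) (f x')]
    with ω h1 h2 hreA hreB hQx hQx' hinf hsub hind hA1 hA2 hA3 hM1 hM2 hM3 hM4 hP1 hP2 hP3 hP4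
      hc1 hc2 hs1 hone hF1 hF2 hF3
  have hone' : (1 : L0 Ω μ) ω = 1 := by rw [hone]; rfl
  have hs1' : (1 - π : L0 Ω μ) ω = 1 - π ω := by rw [hs1, Pi.sub_apply, hone']
  have hAω : A ω = π ω * (starRingEnd ℂ) (π ω) * K.inner x x ω +
      π ω * (starRingEnd ℂ) ((1 : ℂ) - π ω) * K.inner x x' ω +
      (1 - π ω) * (starRingEnd ℂ) (π ω) * K.inner x' x ω +
      (1 - π ω) * (starRingEnd ℂ) ((1 : ℂ) - π ω) * K.inner x' x' ω := by
    rw [hA1, Pi.add_apply, hA2, Pi.add_apply, hA3, Pi.add_apply, hM1, Pi.mul_apply, hP1,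
      Pi.mul_apply, hM2, Pi.mul_apply, hP2, Pi.mul_apply, hM3, Pi.mul_apply, hP3, Pi.mul_apply,
      hM4, Pi.mul_apply, hP4, Pi.mul_apply, hc1, hc2, hs1']
  have hBω : B ω = π ω * f x ω + (1 - π ω) * f x' ω := by
    rw [hF1, Pi.add_apply, hF2, Pi.mul_apply, hF3, Pi.mul_apply, hs1']
  rw [h1, Pi.sub_apply, h2, Pi.smul_apply, hreA, hreB, hAω, hBω, hinf]
  by_cases hc : (QFf K f x - QFf K f x') ω ≤ 0
  · have hc' : QFf K f x ω ≤ QFf K f x' ω := by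
      rw [hsub, Pi.sub_apply] at hc; linarith
    rw [hind, if_pos hc, inf_eq_left.mpr hc', hQx]
    simp [smul_eq_mul]
  · have hc' : QFf K f x' ω ≤ QFf K f x ω := by
      rw [hsub, Pi.sub_apply] at hc; push_neg at hc; linarith
    rw [hind, if_neg hc, inf_eq_right.mpr hc', hQx']
    simp [smul_eq_mul]

end RieszAux2

section RieszAux3

open MeasureTheory

variable {Ω : Type} [MeasurableSpace Ω] {μ : Measure Ω}
variable {X : Type*} [AddCommGroup X] [Module (L0 Ω μ) X]

/-- elementary fact: a real quadratic nonneg on the rationals forces `a ≤ X*Y`. -/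
lemma real_cs_aux {a Xv Yv : ℝ} (hX : 0 ≤ Xv) (hY : 0 ≤ Yv) (ha : 0 ≤ a)
    (h : ∀ q : ℚ, 0 ≤ Xv - 2 * q * a + q ^ 2 * a * Yv) : a ≤ Xv * Yv := by
  have hreal : ∀ t : ℝ, 0 ≤ a * Yv * (t * t) + (-2 * a) * t + Xv := by
    have hcl : IsClosed {u : ℝ | 0 ≤ a * Yv * (u * u) + (-2 * a) * u + Xv} :=
      isClosed_le continuous_const (by continuity)
    have hsub : Set.range ((↑) : ℚ → ℝ) ⊆ {u : ℝ | 0 ≤ a * Yv * (u * u) + (-2 * a) * u + Xv} := by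
      rintro _ ⟨q, rfl⟩
      have hq := h q
      simp only [Set.mem_setOf_eq]
      nlinarith [hq]
    have h4 := hcl.closure_subset_iff.mpr hsub
    rw [(Rat.denseRange_cast (𝕜 := ℝ)).closure_eq] at h4
    intro t
    exact h4 (Set.mem_univ t)
  have hd : discrim (a * Yv) (-2 * a) Xv ≤ 0 := discrim_le_zero hreal
  rw [discrim] at hd
  rcases eq_or_lt_of_le ha with h0 | h0
  · nlinarith
  · nlinarith

/-- expansion of `⟨x - s•y, x - s•y⟩`. -/
lemma KHInner.inner_sub_smul (K : KHInner Ω μ X) (x y : X) (s : L0 Ω μ) :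
    K.inner (x - s • y) (x - s • y) =
      K.inner x x - s * K.inner y x - conjL s * K.inner x y + s * conjL s * K.inner y y := by
  rw [K.inner_sub_left, K.inner_sub_right, K.inner_sub_right, K.smul_left,
    K.inner_smul_right, K.inner_smul_right, K.smul_left]
  ring

/-- Cauchy–Schwarz, pointwise a.e. form. -/
lemma cs_ae (K : KHInner Ω μ X) (x y : X) :
    ∀ᵐ ω ∂μ, ‖K.inner x y ω‖ ≤ K.knorm x ω * K.knorm y ω := by
  set w : L0 Ω μ := K.inner x y with hw
  have key : ∀ q : ℚ, ∀ᵐ ω ∂μ,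
      0 ≤ reL (K.inner x x) ω - 2 * q * Complex.normSq (w ω)
        + (q : ℝ) ^ 2 * Complex.normSq (w ω) * reL (K.inner y y) ω := by
    intro q
    set s : L0 Ω μ := constL Ω μ (q : ℂ) * w with hs
    have hexp : K.inner (x - s • y) (x - s • y)
        = K.inner x x - s * conjL w - conjL s * w + s * conjL s * K.inner y y := by
      rw [K.inner_sub_smul x y s, ← hw, K.conj_symm y x, ← hw]
    have h0 := L0R_nonneg_iff.mp (K.self_nonneg (x - s • y))
    filter_upwards [h0, reL_coe (K.inner (x - s • y) (x - s • y)), reL_coe (K.inner x x),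
      reL_coe (K.inner y y),
      AEEqFun.coeFn_add (K.inner x x - s * conjL w - conjL s * w) (s * conjL s * K.inner y y),
      AEEqFun.coeFn_sub (K.inner x x - s * conjL w) (conjL s * w),
      AEEqFun.coeFn_sub (K.inner x x) (s * conjL w),
      AEEqFun.coeFn_mul s (conjL w), AEEqFun.coeFn_mul (conjL s) w,
      AEEqFun.coeFn_mul (s * conjL s) (K.inner y y), AEEqFun.coeFn_mul s (conjL s),
      conjL_coe w, conjL_coe s,
      AEEqFun.coeFn_mul (constL Ω μ (q : ℂ)) w, AEEqFun.coeFn_const (α := Ω) (μ := μ) ((q : ℚ) : ℂ),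
      ofRealL_coe (reL (K.inner y y)), reL_coe (K.inner y y),
      (K.self_real y ▸ ae_eq_refl (K.inner y y) : K.inner y y =ᵐ[μ] ofRealL (reL (K.inner y y)))]
      with ω h0ω hreE hreX hreY hA1 hS1 hS2 hM1 hM2 hM3 hM4 hcw hcs hsval hconst hofr _ hyreal
    have hsω : s ω = (q : ℂ) * w ω := by
      rw [hs, hsval, Pi.mul_apply]
      simp only [constL]
      rw [hconst]
      rfl
    have hyy : K.inner y y ω = ((reL (K.inner y y) ω : ℝ) : ℂ) := by
      rw [hyreal, hofr]
    have hEω : K.inner (x - s • y) (x - s • y) ω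
        = K.inner x x ω - s ω * (starRingEnd ℂ) (w ω) - (starRingEnd ℂ) (s ω) * w ω
          + s ω * (starRingEnd ℂ) (s ω) * ((reL (K.inner y y) ω : ℝ) : ℂ) := by
      rw [hexp, hA1, Pi.add_apply, hS1, Pi.sub_apply, hS2, Pi.sub_apply, hM1, Pi.mul_apply,
        hM2, Pi.mul_apply, hM3, Pi.mul_apply, hM4, Pi.mul_apply, hcw, hcs, hyy]
    rw [hreE, hEω, hsω] at h0ω
    rw [hreX]
    simp only [Complex.sub_re, Complex.add_re, Complex.mul_re, Complex.mul_im,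
      Complex.conj_re, Complex.conj_im, Complex.ofReal_re, Complex.ofReal_im,
      Complex.ratCast_re, Complex.ratCast_im, Complex.normSq_apply] at h0ω ⊢
    nlinarith [h0ω]
  have hall := ae_all_iff.mpr key
  filter_upwards [hall, K.knorm_coe x, K.knorm_coe y, K.nn_nonneg_ae x, K.nn_nonneg_ae y]
    with ω hq hkx hky hnx hny
  have hcs := real_cs_aux hnx hny (Complex.normSq_nonneg (w ω)) hq
  rw [hkx, hky, Complex.norm_def]
  rw [← Real.sqrt_mul hnx]
  exact Real.sqrt_le_sqrt hcs

end RieszAux3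

section RieszAux4

open MeasureTheory

variable {Ω : Type} [MeasurableSpace Ω] {μ : Measure Ω}
variable {X : Type*} [AddCommGroup X] [Module (L0 Ω μ) X]

/-- expansion of `⟨x + s•y, x + s•y⟩`. -/
lemma KHInner.inner_add_smul (K : KHInner Ω μ X) (x y : X) (s : L0 Ω μ) :
    K.inner (x + s • y) (x + s • y) =
      K.inner x x + s * K.inner y x + conjL s * K.inner x y + s * conjL s * K.inner y y := by
  rw [K.add_left, K.inner_add_right, K.inner_add_right, K.smul_left,
    K.inner_smul_right, K.inner_smul_right, K.smul_left]
  ring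

lemma KHInner.knorm_sub_symm (K : KHInner Ω μ X) (a b : X) :
    K.knorm (a - b) = K.knorm (b - a) := by
  have h : a - b = -(b - a) := by abel
  simp only [KHInner.knorm]
  rw [h, K.inner_neg_neg]

/-- division trick: if `h ≤ D * e i` for all `i` and `InfZero e`, then `h ≤ 0`. -/
lemma le_of_le_mul_infzero {ι : Type} {h D : L0R Ω μ} (hD : 0 ≤ D) (e : ι → L0R Ω μ)
    (hinf : InfZero e) (hle : ∀ i, h ≤ D * e i) : h ≤ 0 := by
  have hcont : Continuous fun r : ℝ => (max r 1)⁻¹ :=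
    (continuous_id.max continuous_const).inv₀
      fun x => (lt_of_lt_of_le zero_lt_one (le_max_right x 1)).ne'
  set invD : L0R Ω μ := (D + 1).comp _ hcont with hinvD
  have hDcoe : ∀ᵐ ω ∂μ, invD ω = (D ω + 1)⁻¹ ∧ 0 ≤ D ω := by
    filter_upwards [AEEqFun.coeFn_comp _ hcont (D + 1), AEEqFun.coeFn_add D 1,
      AEEqFun.coeFn_one (β := ℝ) (μ := μ), L0R_nonneg_iff.mp hD] with ω h1 h2 h3 h4
    have hD1 : (D + 1 : L0R Ω μ) ω = D ω + 1 := by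
      rw [h2, Pi.add_apply, h3]; rfl
    constructor
    · rw [hinvD, h1]
      show (max ((D + 1 : L0R Ω μ) ω) 1)⁻¹ = (D ω + 1)⁻¹
      rw [hD1, max_eq_left (by linarith)]
    · exact h4
  have hgle : ∀ i, h * invD ≤ e i := by
    intro i
    rw [← AEEqFun.coeFn_le]
    filter_upwards [hDcoe, L0R_le_iff.mp (hle i), L0R_nonneg_iff.mp (hinf.1 i),
      AEEqFun.coeFn_mul h invD, AEEqFun.coeFn_mul D (e i)] with ω h1 h2 h3 h4 h5
    rw [h5, Pi.mul_apply] at h2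
    show (h * invD) ω ≤ e i ω
    rw [h4, Pi.mul_apply, h1.1]
    have hpos : (0:ℝ) < D ω + 1 := by linarith [h1.2]
    have hinv : (D ω + 1) * (D ω + 1)⁻¹ = 1 := mul_inv_cancel₀ hpos.ne'
    have hinvnn : 0 ≤ (D ω + 1)⁻¹ := by positivity
    nlinarith [h1.2]
  have hg0 := hinf.2 _ hgle
  rw [← AEEqFun.coeFn_le]
  filter_upwards [hDcoe, L0R_le_iff.mp hg0, AEEqFun.coeFn_mul h invD,
    AEEqFun.coeFn_zero (β := ℝ) (μ := μ)] with ω h1 h2 h3 h4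
  rw [h3, Pi.mul_apply, h1.1] at h2
  have h0' : (0 : L0R Ω μ) ω = 0 := by rw [h4]; rfl
  rw [h0'] at h2
  show h ω ≤ (0 : L0R Ω μ) ω
  rw [h0']
  have hpos : (0:ℝ) < D ω + 1 := by linarith [h1.2]
  calc h ω = (h ω * (D ω + 1)⁻¹) * (D ω + 1) := by field_simp
    _ ≤ 0 := by nlinarith [h2, hpos]

/-- index type for the minimizing net: pairs `(q, b)` with `q` dominating some value of `Q`
and `b` a lower bound of `Q`. -/
def RieszIdx (K : KHInner Ω μ X) (f : X →ₗ[L0 Ω μ] L0 Ω μ) : Type :=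
  {p : L0R Ω μ × L0R Ω μ // (∃ x : X, QFf K f x ≤ p.1) ∧ ∀ y : X, p.2 ≤ QFf K f y}

noncomputable def rieszSemilattice (K : KHInner Ω μ X) (f : X →ₗ[L0 Ω μ] L0 Ω μ) :
    SemilatticeSup (RieszIdx K f) where
  le p p' := p'.1.1 ≤ p.1.1 ∧ p.1.2 ≤ p'.1.2
  le_refl p := ⟨le_rfl, le_rfl⟩
  le_trans p q r h1 h2 := ⟨h2.1.trans h1.1, h1.2.trans h2.2⟩
  le_antisymm p q h1 h2 := Subtype.ext (Prod.ext (le_antisymm h2.1 h1.1) (le_antisymm h1.2 h2.2))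
  sup p p' := ⟨(p.1.1 ⊓ p'.1.1, p.1.2 ⊔ p'.1.2), by
    obtain ⟨x, hx⟩ := p.2.1
    obtain ⟨x', hx'⟩ := p'.2.1
    obtain ⟨z, hz⟩ := mix_exists K f x x'
    exact ⟨⟨z, by rw [hz]; exact inf_le_inf hx hx'⟩,
      fun y => sup_le (p.2.2 y) (p'.2.2 y)⟩⟩
  le_sup_left p p' := ⟨inf_le_left, le_sup_left⟩
  le_sup_right p p' := ⟨inf_le_right, le_sup_right⟩
  sup_le p p' r h1 h2 := ⟨le_inf h1.1 h2.1, sup_le h1.2 h2.2⟩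

end RieszAux4

section RieszAux5

open MeasureTheory

variable {Ω : Type} [MeasurableSpace Ω] {μ : Measure Ω}

lemma mulL_coe (a b : L0 Ω μ) : ∀ᵐ ω ∂μ, (a * b) ω = a ω * b ω :=
  (AEEqFun.coeFn_mul a b).mono fun ω h => by rw [h]; rfl

lemma addL_coe (a b : L0 Ω μ) : ∀ᵐ ω ∂μ, (a + b) ω = a ω + b ω :=
  (AEEqFun.coeFn_add a b).mono fun ω h => by rw [h]; rfl

lemma subL_coe (a b : L0 Ω μ) : ∀ᵐ ω ∂μ, (a - b) ω = a ω - b ω :=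
  (AEEqFun.coeFn_sub a b).mono fun ω h => by rw [h]; rfl

lemma constL_coe (c : ℂ) : ∀ᵐ ω ∂μ, constL Ω μ c ω = c :=
  (AEEqFun.coeFn_const (α := Ω) (μ := μ) c).mono fun ω h => by
    show (AEEqFun.const Ω c : L0 Ω μ) ω = c
    rw [h]; rfl

lemma zeroL_coe : ∀ᵐ ω ∂μ, (0 : L0 Ω μ) ω = 0 :=
  (AEEqFun.coeFn_zero (β := ℂ) (μ := μ)).mono fun ω h => by rw [h]; rfl

lemma mulR_coe (a b : L0R Ω μ) : ∀ᵐ ω ∂μ, (a * b) ω = a ω * b ω :=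
  (AEEqFun.coeFn_mul a b).mono fun ω h => by rw [h]; rfl

lemma addR_coe (a b : L0R Ω μ) : ∀ᵐ ω ∂μ, (a + b) ω = a ω + b ω :=
  (AEEqFun.coeFn_add a b).mono fun ω h => by rw [h]; rfl

lemma subR_coe (a b : L0R Ω μ) : ∀ᵐ ω ∂μ, (a - b) ω = a ω - b ω :=
  (AEEqFun.coeFn_sub a b).mono fun ω h => by rw [h]; rfl

lemma negR_coe (a : L0R Ω μ) : ∀ᵐ ω ∂μ, (-a) ω = -(a ω) :=
  (AEEqFun.coeFn_neg a).mono fun ω h => by rw [h]; rfl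

lemma supR_coe (a b : L0R Ω μ) : ∀ᵐ ω ∂μ, (a ⊔ b) ω = max (a ω) (b ω) :=
  (AEEqFun.coeFn_sup a b).mono fun ω h => by rw [h]

lemma infR_coe (a b : L0R Ω μ) : ∀ᵐ ω ∂μ, (a ⊓ b) ω = min (a ω) (b ω) :=
  (AEEqFun.coeFn_inf a b).mono fun ω h => by rw [h]

lemma smulR_coe (r : ℝ) (a : L0R Ω μ) : ∀ᵐ ω ∂μ, (r • a) ω = r * a ω :=
  (AEEqFun.coeFn_smul r a).mono fun ω h => by rw [h]; rfl

lemma zeroR_coe : ∀ᵐ ω ∂μ, (0 : L0R Ω μ) ω = 0 :=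
  (AEEqFun.coeFn_zero (β := ℝ) (μ := μ)).mono fun ω h => by rw [h]; rfl

end RieszAux5

set_option maxHeartbeats 4000000 in
/-- (`L⁰`-valued Riesz representation theorem.) Every
`L⁰`-bounded `L⁰`-linear functional `f : X → L⁰` on a Kaplansky–Hilbert module `X`
over `L⁰` is of the form `f(φ) = ⟨φ,ψ⟩` for a unique `ψ ∈ X`. -/
theorem statement19 {X : Type*} [AddCommGroup X] [Module (L0 Ω μ) X]
    (K : KHInner Ω μ X) (hK : K.IsKH) (f : X →ₗ[L0 Ω μ] L0 Ω μ)
    (hb : ∃ c : L0R Ω μ, ∀ x : X, absL (f x) ≤ c * K.knorm x) :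
    ∃! ψ : X, ∀ φ : X, f φ = K.inner φ ψ := by
  classical
  obtain ⟨c, hc⟩ := hb
  set c₀ : L0R Ω μ := c ⊔ 0 with hc₀def
  have hc₀ : ∀ᵐ ω ∂μ, 0 ≤ c₀ ω ∧ c ω ≤ c₀ ω := by
    filter_upwards [supR_coe c 0, zeroR_coe] with ω h1 h2
    rw [hc₀def, h1, h2]
    exact ⟨le_max_right _ _, le_max_left _ _⟩
  have hfb : ∀ x : X, ∀ᵐ ω ∂μ, ‖f x ω‖ ≤ c₀ ω * K.knorm x ω := by
    intro x
    filter_upwards [L0R_le_iff.mp (hc x), absL_coe (f x), hc₀, K.knorm_coe x,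
      mulR_coe c (K.knorm x)] with ω h1 h2 h3 h4 h5
    rw [h2, h5] at h1
    have hk : 0 ≤ K.knorm x ω := by rw [h4]; exact Real.sqrt_nonneg _
    nlinarith [h3.1, h3.2]
  set b0 : L0R Ω μ := -(c₀ * c₀) with hb0def
  have hb0coe : ∀ᵐ ω ∂μ, b0 ω = -(c₀ ω * c₀ ω) := by
    filter_upwards [negR_coe (c₀ * c₀), mulR_coe c₀ c₀] with ω h1 h2
    rw [hb0def, h1, h2]
  have hlow : ∀ y : X, b0 ≤ QFf K f y := by
    intro y
    rw [← AEEqFun.coeFn_le]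
    filter_upwards [hb0coe, QFf_coe K f y, hfb y, hc₀, K.knorm_sq_ae y,
      reL_coe (K.inner y y)] with ω h1 h2 h3 h4 h5 h6
    rw [h1, h2]
    have hk2 : K.knorm y ω * K.knorm y ω = (K.inner y y ω).re := h5.1.trans h6
    have hre := Complex.re_le_norm (f y ω)
    nlinarith [h5.2, h4.1, h3, hre, hk2, sq_nonneg (K.knorm y ω - c₀ ω)]
  -- the directed index
  letI instSL : SemilatticeSup (RieszIdx K f) := rieszSemilattice K f
  have hle_def : ∀ p q : RieszIdx K f, p ≤ q ↔ q.1.1 ≤ p.1.1 ∧ p.1.2 ≤ q.1.2 :=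
    fun p q => Iff.rfl
  have hne : Nonempty (RieszIdx K f) := ⟨⟨(0, b0), ⟨0, le_of_eq (QFf_zero K f)⟩, hlow⟩⟩
  set net : RieszIdx K f → X := fun p => p.2.1.choose with hnetdef
  have hnetle : ∀ p : RieszIdx K f, QFf K f (net p) ≤ p.1.1 := fun p => p.2.1.choose_spec
  set e : RieszIdx K f → L0R Ω μ := fun p => (2:ℝ) • sqrtL (p.1.1 - p.1.2) with hedef
  have hqb : ∀ p : RieszIdx K f, p.1.2 ≤ p.1.1 :=
    fun p => (p.2.2 (net p)).trans (hnetle p)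
  have he_coe : ∀ p : RieszIdx K f, ∀ᵐ ω ∂μ, e p ω = 2 * Real.sqrt (p.1.1 ω - p.1.2 ω) := by
    intro p
    filter_upwards [smulR_coe 2 (sqrtL (p.1.1 - p.1.2)), sqrtL_coe (p.1.1 - p.1.2),
      subR_coe p.1.1 p.1.2] with ω h1 h2 h3
    show ((2:ℝ) • sqrtL (p.1.1 - p.1.2)) ω = _
    rw [h1, h2, h3]
  have he_nonneg : ∀ p : RieszIdx K f, 0 ≤ e p := by
    intro p
    rw [L0R_nonneg_iff]
    filter_upwards [he_coe p] with ω h1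
    rw [h1]; positivity
  have he_anti : Antitone e := by
    intro p q hpq
    rw [← AEEqFun.coeFn_le]
    filter_upwards [he_coe p, he_coe q, L0R_le_iff.mp ((hle_def p q).mp hpq).1,
      L0R_le_iff.mp ((hle_def p q).mp hpq).2] with ω h1 h2 h3 h4
    rw [h1, h2]
    have h5 := Real.sqrt_le_sqrt (by linarith : q.1.1 ω - q.1.2 ω ≤ p.1.1 ω - p.1.2 ω)
    linarith
  -- the Cauchy property
  have hcauchy3 : ∀ i j k : RieszIdx K f, k ≤ i → k ≤ j →
      K.knorm (net i - net j) ≤ e k := by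
    intro i j k hki hkj
    set xi : X := net i with hxidef
    set xj : X := net j with hxjdef
    set m : X := constL Ω μ ((1/2 : ℝ) : ℂ) • (xi + xj) with hmdef
    have hi : QFf K f xi ≤ k.1.1 := (hnetle i).trans ((hle_def k i).mp hki).1
    have hj : QFf K f xj ≤ k.1.1 := (hnetle j).trans ((hle_def k j).mp hkj).1
    have hmk : k.1.2 ≤ QFf K f m := k.2.2 m
    have hd : K.inner (xi - xj) (xi - xj)
        = K.inner xi xi - K.inner xi xj - K.inner xj xi + K.inner xj xj := K.inner_sub_sub xi xj
    have hsym : K.inner xj xi = conjL (K.inner xi xj) := K.conj_symm xj xi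
    have hmm : K.inner m m = constL Ω μ ((1/2:ℝ):ℂ) * (conjL (constL Ω μ ((1/2:ℝ):ℂ)) *
        (K.inner xi xi + K.inner xi xj + K.inner xj xi + K.inner xj xj)) := by
      rw [hmdef, K.smul_left, K.inner_smul_right, K.inner_add_add]
    have hfm : f m = constL Ω μ ((1/2:ℝ):ℂ) * (f xi + f xj) := by
      rw [hmdef, LinearMap.map_smul, smul_eq_mul, map_add]
    rw [← AEEqFun.coeFn_le]
    filter_upwards [L0R_le_iff.mp hi, L0R_le_iff.mp hj, L0R_le_iff.mp hmk,
      L0R_le_iff.mp (hqb k), he_coe k, K.knorm_coe (xi - xj),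
      QFf_coe K f xi, QFf_coe K f xj, QFf_coe K f m,
      reL_coe (K.inner (xi - xj) (xi - xj)),
      addL_coe (K.inner xi xi - K.inner xi xj - K.inner xj xi) (K.inner xj xj),
      subL_coe (K.inner xi xi - K.inner xi xj) (K.inner xj xi),
      subL_coe (K.inner xi xi) (K.inner xi xj),
      conjL_coe (K.inner xi xj),
      mulL_coe (constL Ω μ ((1/2:ℝ):ℂ)) (conjL (constL Ω μ ((1/2:ℝ):ℂ)) *
        (K.inner xi xi + K.inner xi xj + K.inner xj xi + K.inner xj xj)),
      mulL_coe (conjL (constL Ω μ ((1/2:ℝ):ℂ)))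
        (K.inner xi xi + K.inner xi xj + K.inner xj xi + K.inner xj xj),
      conjL_coe (constL Ω μ ((1/2:ℝ):ℂ)),
      constL_coe (μ := μ) ((1/2:ℝ):ℂ),
      addL_coe (K.inner xi xi + K.inner xi xj + K.inner xj xi) (K.inner xj xj),
      addL_coe (K.inner xi xi + K.inner xi xj) (K.inner xj xi),
      addL_coe (K.inner xi xi) (K.inner xi xj),
      mulL_coe (constL Ω μ ((1/2:ℝ):ℂ)) (f xi + f xj),
      addL_coe (f xi) (f xj)]
      with ω hiω hjω hmω hqbω heω hknω hQiω hQjω hQmω hreD hA hS1 hS2 hCj hM1 hM2 hCc hCon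
        hSa1 hSa2 hSa3 hF1 hF2
    have hCji : K.inner xj xi ω = (starRingEnd ℂ) (K.inner xi xj ω) := by rw [hsym, hCj]
    have hE1 : (K.inner (xi - xj) (xi - xj)) ω
        = K.inner xi xi ω - K.inner xi xj ω - (starRingEnd ℂ) (K.inner xi xj ω)
          + K.inner xj xj ω := by
      rw [hd, hA, hS1, hS2, hCji]
    have hE2 : K.inner m m ω = (((1/2:ℝ):ℂ)) * ((((1/2:ℝ):ℂ)) *
        (K.inner xi xi ω + K.inner xi xj ω + (starRingEnd ℂ) (K.inner xi xj ω)
          + K.inner xj xj ω)) := by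
      rw [hmm, hM1, hM2, hCc, hCon, Complex.conj_ofReal, hSa1, hSa2, hSa3, hCji]
    have hE3 : f m ω = (((1/2:ℝ):ℂ)) * (f xi ω + f xj ω) := by
      rw [hfm, hF1, hF2, hCon]
    have hre_mm : (K.inner m m ω).re = (1/2 : ℝ) * ((1/2 : ℝ) *
        ((K.inner xi xi ω).re + (K.inner xi xj ω).re + (K.inner xi xj ω).re
          + (K.inner xj xj ω).re)) := by
      rw [hE2, Complex.re_ofReal_mul, Complex.re_ofReal_mul]
      simp [Complex.add_re, Complex.conj_re]
    have hre_fm : (f m ω).re = (1/2 : ℝ) * ((f xi ω).re + (f xj ω).re) := by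
      rw [hE3, Complex.re_ofReal_mul, Complex.add_re]
    have hre_D : (K.inner (xi - xj) (xi - xj) ω).re
        = (K.inner xi xi ω).re - 2 * (K.inner xi xj ω).re + (K.inner xj xj ω).re := by
      rw [hE1]
      simp [Complex.add_re, Complex.sub_re, Complex.conj_re]
      ring
    have hub : (K.inner xi xi ω).re - 2 * (K.inner xi xj ω).re + (K.inner xj xj ω).re
        ≤ 4 * (k.1.1 ω - k.1.2 ω) := by
      rw [hQmω, hre_mm, hre_fm] at hmω
      rw [hQiω] at hiω
      rw [hQjω] at hjω
      linarith
    rw [hknω, heω, hreD, hre_D]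
    calc Real.sqrt ((K.inner xi xi ω).re - 2 * (K.inner xi xj ω).re + (K.inner xj xj ω).re)
        ≤ Real.sqrt (4 * (k.1.1 ω - k.1.2 ω)) := Real.sqrt_le_sqrt hub
      _ = 2 * Real.sqrt (k.1.1 ω - k.1.2 ω) := by
          rw [show (4:ℝ) * (k.1.1 ω - k.1.2 ω) = (2:ℝ)^2 * (k.1.1 ω - k.1.2 ω) by ring,
            Real.sqrt_mul (by positivity), Real.sqrt_sq (by norm_num)]
  -- InfZero of e
  have hinf : InfZero e := by
    refine ⟨he_nonneg, ?_⟩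
    intro g hg
    set u : L0R Ω μ := (g ⊔ 0) * (g ⊔ 0) with hudef
    have hu_coe : ∀ᵐ ω ∂μ, u ω = max (g ω) 0 * max (g ω) 0 := by
      filter_upwards [mulR_coe (g ⊔ 0) (g ⊔ 0), supR_coe g 0, zeroR_coe] with ω h1 h2 h3
      show ((g ⊔ 0) * (g ⊔ 0)) ω = _
      rw [h1, h2, h3]
    have hstep : ∀ n : ℕ, ∀ y : X, b0 + ((n:ℝ)/4) • u ≤ QFf K f y := by
      intro n
      induction n with
      | zero =>
        intro y
        have h0 : b0 + (((0:ℕ):ℝ)/4) • u = b0 := by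
          simp
        rw [h0]
        exact hlow y
      | succ n ih =>
        intro y
        set pn : RieszIdx K f := ⟨(QFf K f y, b0 + ((n:ℝ)/4) • u), ⟨y, le_rfl⟩, ih⟩ with hpndef
        have hgp := hg pn
        have hcast : ((n + 1 : ℕ) : ℝ) = (n : ℝ) + 1 := by push_cast; ring
        rw [hcast, ← AEEqFun.coeFn_le]
        filter_upwards [L0R_le_iff.mp hgp, he_coe pn, L0R_le_iff.mp (ih y), hu_coe,
          addR_coe b0 (((n:ℝ)/4) • u), smulR_coe ((n:ℝ)/4) u,
          addR_coe b0 ((((n:ℝ)+1)/4) • u), smulR_coe (((n:ℝ)+1)/4) u]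
          with ω h1 h2 h3 h4 h5 h6 h7 h8
        rw [h7, h8]
        have hBn : (b0 + ((n:ℝ)/4) • u) ω = b0 ω + (n:ℝ)/4 * u ω := by rw [h5, h6]
        rw [hBn] at h3
        -- h1 : g ω ≤ e pn ω, h2 : e pn ω = 2 * sqrt (QFf y ω - Bn ω)
        rw [h2] at h1
        have hBn' : pn.1.2 ω = b0 ω + (n:ℝ)/4 * u ω := hBn
        have hq' : pn.1.1 ω = QFf K f y ω := rfl
        rw [hBn', hq'] at h1
        set t : ℝ := QFf K f y ω - (b0 ω + (n:ℝ)/4 * u ω) with htdef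
        have ht : 0 ≤ t := by rw [htdef]; linarith
        have hmax : max (g ω) 0 ≤ 2 * Real.sqrt t := by
          apply max_le
          · exact h1
          · positivity
        have hsq : max (g ω) 0 * max (g ω) 0 ≤ 4 * t := by
          have h9 := mul_self_le_mul_self (le_max_right (g ω) 0) hmax
          have h10 : Real.sqrt t * Real.sqrt t = t := Real.mul_self_sqrt ht
          nlinarith [h9, h10]
        rw [← h4] at hsq
        rw [htdef] at hsq
        linarith
    have hn0 : ∀ n : ℕ, ∀ᵐ ω ∂μ, b0 ω + ((n:ℝ)/4) * u ω ≤ 0 := by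
      intro n
      have h0 := (hstep n 0).trans_eq (QFf_zero K f)
      filter_upwards [L0R_le_iff.mp h0, addR_coe b0 (((n:ℝ)/4) • u),
        smulR_coe ((n:ℝ)/4) u, zeroR_coe] with ω h1 h2 h3 h4
      rw [h2, h3, h4] at h1
      exact h1
    have hall := ae_all_iff.mpr hn0
    rw [← AEEqFun.coeFn_le]
    filter_upwards [hall, hu_coe, zeroR_coe] with ω h1 h2 h3
    rw [h3]
    by_contra hgt
    push_neg at hgt
    have hu_pos : 0 < u ω := by
      rw [h2, max_eq_left hgt.le]
      exact mul_pos hgt hgt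
    obtain ⟨n, hn⟩ := exists_nat_gt ((-(b0 ω)) / (u ω / 4))
    have h5 := h1 n
    rw [div_lt_iff₀ (by positivity)] at hn
    nlinarith [h5, hn, hu_pos]
  -- completeness gives the limit
  obtain ⟨ψ, hconv⟩ := hK.2 (RieszIdx K f) hne instSL net ⟨e, he_anti, hinf, hcauchy3⟩
  obtain ⟨e', he'a, he'inf, he'b⟩ := hconv
  have hdist' : ∀ p : RieszIdx K f, K.knorm (net p - ψ) ≤ e' p := by
    intro p
    refine le_trans ?_ (he'b p)
    rw [← AEEqFun.coeFn_le]
    filter_upwards [AEEqFun.coeFn_abs (K.knorm (net p - ψ) - 0),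
      subR_coe (K.knorm (net p - ψ)) 0, zeroR_coe] with ω h1 h2 h3
    rw [h1, h2, h3, sub_zero]
    exact le_abs_self _
  -- ψ is a minimizer of QFf
  set p₀ : RieszIdx K f := ⟨(0, b0), ⟨0, le_of_eq (QFf_zero K f)⟩, hlow⟩ with hp₀def
  set Mψ : L0R Ω μ := (2:ℝ) • c₀ + e' p₀ with hMψdef
  have hMψ_coe : ∀ᵐ ω ∂μ, Mψ ω = 2 * c₀ ω + e' p₀ ω := by
    filter_upwards [addR_coe ((2:ℝ) • c₀) (e' p₀), smulR_coe 2 c₀] with ω h1 h2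
    rw [hMψdef, h1, h2]
  -- norm bound for net elements with QFf ≤ 0, pointwise
  have hknet : ∀ p : RieszIdx K f, QFf K f (net p) ≤ 0 →
      ∀ᵐ ω ∂μ, K.knorm (net p) ω ≤ 2 * c₀ ω := by
    intro p hp
    filter_upwards [L0R_le_iff.mp hp, QFf_coe K f (net p), K.knorm_sq_ae (net p),
      reL_coe (K.inner (net p) (net p)), hfb (net p), hc₀, zeroR_coe] with ω h1 h2 h3 h4 h5 h6 h7
    rw [h2, h7] at h1
    rw [h4] at h3
    have hre := Complex.re_le_norm (f (net p) ω)
    rcases eq_or_lt_of_le h3.2 with h0 | h0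
    · rw [← h0]; linarith [h6.1]
    · nlinarith [h3.1, h6.1, h5]
  have hψb : ∀ᵐ ω ∂μ, K.knorm ψ ω ≤ Mψ ω := by
    set z0 : X := net p₀ with hz0def
    have hQz0 : QFf K f z0 ≤ 0 := hnetle p₀
    have hkz0 := hknet p₀ hQz0
    have hkd0 : K.knorm (ψ - z0) ≤ e' p₀ := by
      rw [← K.knorm_sub_symm z0 ψ]
      exact hdist' p₀
    set d0 : X := ψ - z0 with hd0def
    have hsum : z0 + d0 = ψ := by rw [hd0def]; abel
    have hid : K.inner ψ ψ
        = K.inner z0 z0 + K.inner z0 d0 + K.inner d0 z0 + K.inner d0 d0 := by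
      rw [← hsum, K.inner_add_add]
    have hsym2 : K.inner d0 z0 = conjL (K.inner z0 d0) := K.conj_symm d0 z0
    filter_upwards [L0R_le_iff.mp hkd0, hkz0, hMψ_coe, cs_ae K z0 d0,
      K.knorm_sq_ae ψ, K.knorm_sq_ae z0, K.knorm_sq_ae d0,
      reL_coe (K.inner ψ ψ), reL_coe (K.inner z0 z0), reL_coe (K.inner d0 d0),
      addL_coe (K.inner z0 z0 + K.inner z0 d0 + K.inner d0 z0) (K.inner d0 d0),
      addL_coe (K.inner z0 z0 + K.inner z0 d0) (K.inner d0 z0),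
      addL_coe (K.inner z0 z0) (K.inner z0 d0),
      conjL_coe (K.inner z0 d0)]
      with ω h1 h2 h3 h4 h5 h6 h7 h8 h9 h10 h11 h12 h13 h14
    have hidω : (K.inner ψ ψ ω).re = (K.inner z0 z0 ω).re + 2 * (K.inner z0 d0 ω).re
        + (K.inner d0 d0 ω).re := by
      rw [hid, h11, h12, h13, hsym2, h14]
      simp [Complex.add_re, Complex.conj_re]
      ring
    have hkψ2 : K.knorm ψ ω * K.knorm ψ ω = (K.inner ψ ψ ω).re := h5.1.trans h8
    have hkz2 : K.knorm z0 ω * K.knorm z0 ω = (K.inner z0 z0 ω).re := h6.1.trans h9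
    have hkd2 : K.knorm d0 ω * K.knorm d0 ω = (K.inner d0 d0 ω).re := h7.1.trans h10
    have hre1 : (K.inner z0 d0 ω).re ≤ K.knorm z0 ω * K.knorm d0 ω :=
      (Complex.re_le_norm _).trans h4
    have hsq : K.knorm ψ ω * K.knorm ψ ω
        ≤ (K.knorm z0 ω + K.knorm d0 ω) * (K.knorm z0 ω + K.knorm d0 ω) := by
      nlinarith [hkψ2, hkz2, hkd2, hre1, hidω]
    have hle : K.knorm ψ ω ≤ K.knorm z0 ω + K.knorm d0 ω := by
      nlinarith [h5.2, h6.2, h7.2, hsq]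
    rw [h3]
    linarith [h1, h2]
  set D : L0R Ω μ := Mψ + (4:ℝ) • c₀ with hDdef
  have hD_coe : ∀ᵐ ω ∂μ, D ω = Mψ ω + 4 * c₀ ω := by
    filter_upwards [addR_coe Mψ ((4:ℝ) • c₀), smulR_coe 4 c₀] with ω h1 h2
    show (Mψ + (4:ℝ) • c₀) ω = _
    rw [h1, h2]
  have hD : 0 ≤ D := by
    rw [L0R_nonneg_iff]
    filter_upwards [hD_coe, hc₀, hMψ_coe, L0R_nonneg_iff.mp (he'inf.1 p₀)] with ω h1 h2 h3 h4
    rw [h1, h3]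
    linarith [h2.1]
  have hmin : ∀ x : X, QFf K f ψ ≤ QFf K f x := by
    intro x
    have hbound : ∀ p : RieszIdx K f, QFf K f ψ - QFf K f x ≤ D * e' p := by
      intro p
      set px : RieszIdx K f := ⟨(QFf K f x, b0), ⟨x, le_rfl⟩, hlow⟩ with hpxdef
      set P : RieszIdx K f := p ⊔ px ⊔ p₀ with hPdef
      set z : X := net P with hzdef
      have hpP : p ≤ P := le_trans le_sup_left le_sup_left
      have hpxP : px ≤ P := le_trans le_sup_right le_sup_left
      have hp₀P : p₀ ≤ P := le_sup_right
      have hQzx : QFf K f z ≤ QFf K f x := (hnetle P).trans ((hle_def px P).mp hpxP).1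
      have hQz0 : QFf K f z ≤ 0 := (hnetle P).trans ((hle_def p₀ P).mp hp₀P).1
      have hkz := hknet P hQz0
      have he'Pp : e' P ≤ e' p := he'a hpP
      have hkd : K.knorm (ψ - z) ≤ e' p := by
        rw [← K.knorm_sub_symm z ψ]
        exact (hdist' P).trans he'Pp
      set d : X := ψ - z with hddef
      have hid : K.inner ψ ψ = K.inner z z + K.inner d ψ + K.inner z d := by
        rw [hddef, K.inner_sub_left, K.inner_sub_right]
        ring
      have hfd : f d = f ψ - f z := by rw [hddef, map_sub]
      rw [← AEEqFun.coeFn_le]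
      filter_upwards [QFf_coe K f ψ, QFf_coe K f z,
        L0R_le_iff.mp hQzx, hkz, L0R_le_iff.mp hkd, hψb, hc₀, hfb d,
        cs_ae K d ψ, cs_ae K z d,
        K.knorm_sq_ae ψ, K.knorm_sq_ae z, K.knorm_sq_ae d,
        addL_coe (K.inner z z + K.inner d ψ) (K.inner z d),
        addL_coe (K.inner z z) (K.inner d ψ),
        subL_coe (f ψ) (f z),
        subR_coe (QFf K f ψ) (QFf K f x), mulR_coe D (e' p), hD_coe,
        L0R_nonneg_iff.mp (he'inf.1 p)]
        with ω hQψ hQz hZX hKZ hKD hPSI hC0 hFD hCS1 hCS2 hsψ hsz hsd hA1 hA2 hFS hSub hMul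
          hDco hE'nn
      rw [hSub, hMul, hDco, hQψ]
      rw [hQz] at hZX
      have hidω : (K.inner ψ ψ ω).re
          = (K.inner z z ω).re + (K.inner d ψ ω).re + (K.inner z d ω).re := by
        rw [hid, hA1, hA2]
        simp [Complex.add_re]
      have hfdω : f d ω = f ψ ω - f z ω := by rw [hfd, hFS]
      have h1 : (K.inner d ψ ω).re ≤ K.knorm d ω * K.knorm ψ ω :=
        (Complex.re_le_norm _).trans hCS1
      have h2 : (K.inner z d ω).re ≤ K.knorm z ω * K.knorm d ω :=
        (Complex.re_le_norm _).trans hCS2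
      have h3 : -(f d ω).re ≤ c₀ ω * K.knorm d ω :=
        (neg_le_abs _).trans ((Complex.abs_re_le_norm _).trans hFD)
      have t1 : K.knorm d ω * K.knorm ψ ω ≤ e' p ω * Mψ ω :=
        mul_le_mul hKD hPSI hsψ.2 hE'nn
      have t2 : K.knorm z ω * K.knorm d ω ≤ (2 * c₀ ω) * e' p ω :=
        mul_le_mul hKZ hKD hsd.2 (by linarith [hC0.1])
      have t3 : c₀ ω * K.knorm d ω ≤ c₀ ω * e' p ω := mul_le_mul_of_nonneg_left hKD hC0.1
      have hfd_re : (f d ω).re = (f ψ ω).re - (f z ω).re := by rw [hfdω, Complex.sub_re]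
      nlinarith [t1, t2, t3, h1, h2, h3, hidω, hfd_re, hZX]
    have hfin := le_of_le_mul_infzero hD e' he'inf hbound
    rw [← AEEqFun.coeFn_le]
    filter_upwards [L0R_le_iff.mp hfin, subR_coe (QFf K f ψ) (QFf K f x), zeroR_coe]
      with ω h1 h2 h3
    rw [h2, h3] at h1
    linarith
  -- the variational argument
  have hrep : ∀ φ : X, f φ = K.inner φ ψ := by
    intro φ
    set w : L0 Ω μ := K.inner φ ψ - f φ with hwdef
    have hkey : ∀ n : ℕ, ∀ᵐ ω ∂μ,
        0 ≤ -2 * (1/((n:ℝ)+1)) * Complex.normSq (w ω)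
          + (1/((n:ℝ)+1))^2 * Complex.normSq (w ω) * reL (K.inner φ φ) ω := by
      intro n
      set t : ℝ := 1/((n:ℝ)+1) with htdef
      set s : L0 Ω μ := constL Ω μ ((-t : ℝ) : ℂ) * conjL w with hsdef
      have hexp : K.inner (ψ + s • φ) (ψ + s • φ)
          = K.inner ψ ψ + s * K.inner φ ψ + conjL s * conjL (K.inner φ ψ)
            + s * conjL s * K.inner φ φ := by
        rw [K.inner_add_smul ψ φ s, K.conj_symm ψ φ]
      have hfs : f (ψ + s • φ) = f ψ + s * f φ := by
        rw [map_add, LinearMap.map_smul, smul_eq_mul]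
      have hQle := L0R_le_iff.mp (hmin (ψ + s • φ))
      filter_upwards [hQle, QFf_coe K f ψ, QFf_coe K f (ψ + s • φ),
        reL_coe (K.inner φ φ),
        addL_coe (K.inner ψ ψ + s * K.inner φ ψ + conjL s * conjL (K.inner φ ψ))
          (s * conjL s * K.inner φ φ),
        addL_coe (K.inner ψ ψ + s * K.inner φ ψ) (conjL s * conjL (K.inner φ ψ)),
        addL_coe (K.inner ψ ψ) (s * K.inner φ ψ),
        mulL_coe s (K.inner φ ψ),
        mulL_coe (conjL s) (conjL (K.inner φ ψ)),
        mulL_coe (s * conjL s) (K.inner φ φ),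
        mulL_coe s (conjL s),
        conjL_coe s, conjL_coe (K.inner φ ψ), conjL_coe w,
        mulL_coe (constL Ω μ ((-t : ℝ) : ℂ)) (conjL w),
        constL_coe (μ := μ) ((-t : ℝ) : ℂ),
        subL_coe (K.inner φ ψ) (f φ),
        addL_coe (f ψ) (s * f φ), mulL_coe s (f φ),
        (K.self_real φ ▸ ae_eq_refl (K.inner φ φ) :
          K.inner φ φ =ᵐ[μ] ofRealL (reL (K.inner φ φ))),
        ofRealL_coe (reL (K.inner φ φ))]
        with ω hO hQψω hQsω hreφ hA1 hA2 hA3 hM1 hM2 hM3 hM4 hCs hCip hCw hMc hConst hWsub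
          hFadd hFmul hφreal hofr
      have hsω : s ω = ((-t : ℝ) : ℂ) * (starRingEnd ℂ) (w ω) := by
        show (constL Ω μ ((-t : ℝ) : ℂ) * conjL w) ω = _
        rw [hMc, hConst, hCw]
      have hwω : w ω = K.inner φ ψ ω - f φ ω := by
        show (K.inner φ ψ - f φ) ω = _
        rw [hWsub]
      have hφω : K.inner φ φ ω = ((reL (K.inner φ φ) ω : ℝ) : ℂ) := by rw [hφreal, hofr]
      have hEω : K.inner (ψ + s • φ) (ψ + s • φ) ω
          = K.inner ψ ψ ω + s ω * K.inner φ ψ ω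
            + (starRingEnd ℂ) (s ω) * (starRingEnd ℂ) (K.inner φ ψ ω)
            + s ω * (starRingEnd ℂ) (s ω) * ((reL (K.inner φ φ) ω : ℝ) : ℂ) := by
        rw [hexp, hA1, hA2, hA3, hM1, hM2, hM3, hM4, hCs, hCip, hφω]
      have hfsω : f (ψ + s • φ) ω = f ψ ω + s ω * f φ ω := by
        rw [hfs, hFadd, hFmul]
      have hP : K.inner φ ψ ω = w ω + f φ ω := by rw [hwω]; ring
      have hQQ := hO
      rw [hQψω, hQsω, hEω, hfsω, hsω, hP] at hQQ
      have ht_pos : (0:ℝ) < t := by rw [htdef]; positivity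
      simp only [Complex.add_re, Complex.sub_re, Complex.mul_re, Complex.mul_im,
        Complex.conj_re, Complex.conj_im, Complex.ofReal_re, Complex.ofReal_im,
        Complex.neg_re, Complex.neg_im, Complex.add_im, Complex.sub_im,
        Complex.normSq_apply] at hQQ ⊢
      nlinarith [hQQ]
    have hw0 : w = 0 := by
      apply AEEqFun.ext
      have hall := ae_all_iff.mpr hkey
      filter_upwards [hall, zeroL_coe, K.nn_nonneg_ae φ] with ω h1 h2 h3
      rw [h2]
      by_contra hne
      have hA : 0 < Complex.normSq (w ω) := Complex.normSq_pos.mpr hne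
      obtain ⟨n, hn⟩ := exists_nat_gt (reL (K.inner φ φ) ω)
      have h4 := h1 n
      have hden : ((n:ℝ)+1) ≠ 0 := by positivity
      have hden' : (0:ℝ) < (n:ℝ)+1 := by positivity
      rw [div_pow, one_pow] at h4
      have h5 : 0 ≤ -2 * ((n:ℝ)+1) * Complex.normSq (w ω)
          + Complex.normSq (w ω) * reL (K.inner φ φ) ω := by
        have e1 : -2 * (1/((n:ℝ)+1)) * Complex.normSq (w ω)
            + 1/(((n:ℝ)+1)^2) * Complex.normSq (w ω) * reL (K.inner φ φ) ω
            = (-2 * ((n:ℝ)+1) * Complex.normSq (w ω)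
              + Complex.normSq (w ω) * reL (K.inner φ φ) ω) / (((n:ℝ)+1)^2) := by
          field_simp
        rw [e1, le_div_iff₀ (by positivity)] at h4
        linarith [h4]
      nlinarith [hA, hn, h3, h5, mul_lt_mul_of_pos_left hn hA, Nat.cast_nonneg (α := ℝ) n]
    rw [hwdef] at hw0
    exact (sub_eq_zero.mp hw0).symm
  refine ⟨ψ, hrep, ?_⟩
  intro ψ' hψ'
  have hall : ∀ φ : X, K.inner φ ψ' = K.inner φ ψ := fun φ => (hψ' φ).symm.trans (hrep φ)
  have hd := hall (ψ' - ψ)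
  have h0 : K.inner (ψ' - ψ) (ψ' - ψ) = 0 := by
    rw [K.inner_sub_right, hd, sub_self]
  have := K.definite _ h0
  exact sub_eq_zero.mp this


end KHPaper
end
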